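/- arXiv:2112.00481 — 6 statements merged into one kernel-verified Lean document; each statement's English description precedes it below -/
import Mathlib

section
/- If C : H → H is ℓ⁻¹-cocoercive with respect to S, i.e. ⟨Cx − Cy, x − y⟩ ≥ ℓ⁻¹‖Cx − Cy‖²_{S⁻¹} for all x, y, then for all x, y, z ∈ H, ⟨Cx − Cy, z − y⟩ ≥ −(ℓ/4)‖z − x‖²_S. -/
open RealInnerProductSpace

theorem stmt1 {H : Type*} [NormedAddCommGroup H] [InnerProductSpace ℝ H]
    (S Sinv : H →L[ℝ] H)
    (hsa : ∀ x y : H, ⟪S x, y⟫ = ⟪x, S y⟫)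
    (m : ℝ) (hm : 0 < m) (hpos : ∀ x : H, ⟪S x, x⟫ ≥ m * ‖x‖ ^ 2)
    (hinv : ∀ x : H, Sinv (S x) = x ∧ S (Sinv x) = x)
    (ℓ : ℝ) (hℓ : 0 < ℓ) (C : H → H)
    (hcoco : ∀ x y : H, ⟪C x - C y, x - y⟫ ≥ ℓ⁻¹ * ⟪Sinv (C x - C y), C x - C y⟫) :
    ∀ x y z : H, ⟪C x - C y, z - y⟫ ≥ -(ℓ / 4) * ⟪S (z - x), z - x⟫ := by
  intro x y z
  set u := C x - C y with hu
  set v := Sinv u with hv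
  set w := z - x with hw
  have hSv : S v = u := (hinv u).2
  -- positivity of the quadratic form at ℓ⁻¹ v + (1/2) w
  have hq : ⟪S (ℓ⁻¹ • v + (1/2 : ℝ) • w), ℓ⁻¹ • v + (1/2 : ℝ) • w⟫ ≥ 0 := by
    refine le_trans ?_ (hpos _)
    positivity
  have hexp : ⟪S (ℓ⁻¹ • v + (1/2 : ℝ) • w), ℓ⁻¹ • v + (1/2 : ℝ) • w⟫
      = ℓ⁻¹ * ℓ⁻¹ * ⟪S v, v⟫ + ℓ⁻¹ * ⟪S v, w⟫ + (1/4 : ℝ) * ⟪S w, w⟫ := by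
    simp only [map_add, map_smul, inner_add_left, inner_add_right, inner_smul_left,
      inner_smul_right, conj_trivial]
    rw [hsa w v, real_inner_comm w (S v)]
    ring
  have hq2 : ℓ⁻¹ * ⟪S v, v⟫ + ⟪S v, w⟫ + (ℓ/4 : ℝ) * ⟪S w, w⟫ ≥ 0 := by
    have := mul_le_mul_of_nonneg_left (hexp ▸ hq) (le_of_lt hℓ)
    rw [mul_zero] at this
    calc (0:ℝ) ≤ ℓ * (ℓ⁻¹ * ℓ⁻¹ * ⟪S v, v⟫ + ℓ⁻¹ * ⟪S v, w⟫ + (1/4 : ℝ) * ⟪S w, w⟫) := this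
      _ = ℓ⁻¹ * ⟪S v, v⟫ + ⟪S v, w⟫ + (ℓ/4 : ℝ) * ⟪S w, w⟫ := by
          field_simp
  have hvv : ⟪S v, v⟫ = ⟪Sinv u, u⟫ := by rw [hSv, real_inner_comm]
  have hsplit : ⟪u, z - y⟫ = ⟪u, w⟫ + ⟪u, x - y⟫ := by
    rw [← inner_add_right]
    congr 1
    rw [hw]
    abel
  have hc := hcoco x y
  rw [← hu] at hc
  rw [hsplit]
  have huv : ⟪Sinv u, u⟫ = ⟪u, v⟫ := by rw [hv, real_inner_comm]
  rw [hSv] at hq2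
  rw [huv] at hc
  have hSw : ⟪S w, w⟫ = ⟪S (z - x), z - x⟫ := rfl
  linarith [hc, hq2, huv, hSw]
end

section
/- Let M : H → H and γ > 0 be such that γM − S is L-Lipschitz continuous with respect to S with L < 1 (meaning ‖(γM−S)x − (γM−S)y‖_{S⁻¹} ≤ L‖x−y‖_S for all x,y). Then M is (1−L²)/(2γ)-strongly monotone with respect to S, i.e. ⟨Mx − My, x − y⟩ ≥ ((1−L²)/(2γ))‖x−y‖²_S for all x, y ∈ H. -/
open RealInnerProductSpace

theorem stmt2 {H : Type*} [NormedAddCommGroup H] [InnerProductSpace ℝ H]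
    (S Sinv : H →L[ℝ] H)
    (hsa : ∀ x y : H, ⟪S x, y⟫ = ⟪x, S y⟫)
    (m : ℝ) (hm : 0 < m) (hpos : ∀ x : H, ⟪S x, x⟫ ≥ m * ‖x‖ ^ 2)
    (hinv : ∀ x : H, Sinv (S x) = x ∧ S (Sinv x) = x)
    (M : H → H) (γ L : ℝ) (hγ : 0 < γ) (hL0 : 0 ≤ L) (hL1 : L < 1)
    (hLip : ∀ x y : H,
      Real.sqrt ⟪Sinv ((γ • M x - S x) - (γ • M y - S y)), (γ • M x - S x) - (γ • M y - S y)⟫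
        ≤ L * Real.sqrt ⟪S (x - y), x - y⟫) :
    ∀ x y : H, ⟪M x - M y, x - y⟫ ≥ ((1 - L ^ 2) / (2 * γ)) * ⟪S (x - y), x - y⟫ := by
  have hq : ∀ z : H, 0 ≤ ⟪S z, z⟫ := fun z =>
    le_trans (by positivity) (hpos z)
  have hqinv : ∀ z : H, 0 ≤ ⟪Sinv z, z⟫ := by
    intro z
    have : ⟪Sinv z, z⟫ = ⟪S (Sinv z), Sinv z⟫ := by
      nth_rewrite 2 [← (hinv z).2]
      rw [real_inner_comm]
    rw [this]; exact hq _
  intro x y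
  set Δ := x - y with hΔ
  set w := M x - M y with hw
  have hu : (γ • M x - S x) - (γ • M y - S y) = γ • w - S Δ := by
    rw [hw, hΔ, smul_sub, map_sub]; abel
  have hswap : ⟪Sinv w, S Δ⟫ = ⟪w, Δ⟫ := by
    rw [← hsa, (hinv w).2]
  have hexp : ⟪Sinv (γ • w - S Δ), γ • w - S Δ⟫
      = γ ^ 2 * ⟪Sinv w, w⟫ - 2 * γ * ⟪w, Δ⟫ + ⟪S Δ, Δ⟫ := by
    have h1 : Sinv (γ • w - S Δ) = γ • Sinv w - Δ := by
      rw [map_sub, map_smul, (hinv Δ).1]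
    rw [h1, inner_sub_left, inner_sub_right, inner_sub_right,
      real_inner_smul_left, real_inner_smul_left, real_inner_smul_right, real_inner_smul_right,
      hswap, real_inner_comm Δ w, real_inner_comm Δ (S Δ), ← hsa]
    ring
  have hb := hq Δ
  have ha := hqinv (γ • w - S Δ)
  have hsq : ⟪Sinv (γ • w - S Δ), γ • w - S Δ⟫ ≤ L ^ 2 * ⟪S Δ, Δ⟫ := by
    have h := hLip x y
    rw [hu, ← hΔ] at h
    have h2 : Real.sqrt ⟪Sinv (γ • w - S Δ), γ • w - S Δ⟫ ^ 2
        ≤ (L * Real.sqrt ⟪S Δ, Δ⟫) ^ 2 := by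
      apply pow_le_pow_left₀ (Real.sqrt_nonneg _) h
    rwa [Real.sq_sqrt ha, mul_pow, Real.sq_sqrt hb] at h2
  have hp := hqinv w
  rw [hexp] at hsq
  rw [ge_iff_le, div_mul_eq_mul_div, div_le_iff₀ (by positivity)]
  nlinarith [sq_nonneg γ, mul_nonneg (sq_nonneg γ) hp]
end

section
/- If M : H → H is continuous, monotone, strongly monotone with constant m > 0, has full domain, and A : H → 2^H is maximally monotone, then the operator (M + A)⁻¹ is single-valued with full domain (i.e., for every v ∈ H there exists a unique x ∈ H with v ∈ Mx + Ax). -/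
open RealInnerProductSpace

private lemma aux_nonneg (β K : ℝ) (hK : 0 ≤ K) (h : ∀ t : ℝ, 0 < t → t ≤ 1 → 0 ≤ β + t * K) :
    0 ≤ β := by
  by_contra hβ
  push_neg at hβ
  rcases eq_or_lt_of_le hK with hK0 | hK0
  · have := h 1 one_pos le_rfl
    nlinarith
  · have ht1 : 0 < min 1 (-β / (2 * K)) := by
      apply lt_min one_pos
      apply div_pos (by linarith) (by linarith)
    have ht2 : min 1 (-β / (2 * K)) ≤ 1 := min_le_left _ _
    have := h _ ht1 ht2
    have hle : min 1 (-β / (2 * K)) * K ≤ (-β / (2 * K)) * K := by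
      apply mul_le_mul_of_nonneg_right (min_le_right _ _) hK
    have : (-β / (2 * K)) * K = -β / 2 := by field_simp
    nlinarith [min_le_right 1 (-β / (2 * K))]

set_option maxHeartbeats 1000000 in
private theorem minty0 {H : Type*} [NormedAddCommGroup H] [InnerProductSpace ℝ H]
    [CompleteSpace H] (A : H → Set H)
    (hmono : ∀ x y u v : H, u ∈ A x → v ∈ A y → ⟪u - v, x - y⟫ ≥ 0)
    (hmax : ∀ x u : H, (∀ y v : H, v ∈ A y → ⟪u - v, x - y⟫ ≥ 0) → u ∈ A x) :
    ∃ x u : H, u ∈ A x ∧ x + u = 0 := by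
  classical
  -- the graph is nonempty
  have hne : ∃ p : H × H, p.2 ∈ A p.1 := by
    by_contra hcon
    push_neg at hcon
    exact hcon (0, 0) (hmax 0 0 fun y v hv => absurd hv (hcon (y, v)))
  obtain ⟨p₀, hp₀⟩ := hne
  set S : Set (H × H) := {p : H × H | p.2 ∈ A p.1} with hSdef
  haveI : Nonempty S := ⟨⟨p₀, hp₀⟩⟩
  set L : H × H → H → H → ℝ := fun p x u => ⟪x, p.2⟫ + ⟪p.1, u⟫ - ⟪p.1, p.2⟫ with hLdef
  set q : H → H → ℝ := fun x u => ‖x‖ ^ 2 / 2 + ‖u‖ ^ 2 / 2 with hqdef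
  set D : Set (H × H) := {z | BddAbove (Set.range fun p : S => L p.1 z.1 z.2)} with hDdef
  set F : H → H → ℝ := fun x u => ⨆ p : S, L p.1 x u with hFdef
  clear_value L q D F
  have hq1 : ∀ a b : H, q a b = ‖a‖ ^ 2 / 2 + ‖b‖ ^ 2 / 2 := fun a b => by rw [hqdef]
  have hL1 : ∀ (p : H × H) (x u : H), L p x u = ⟪x, p.2⟫ + ⟪p.1, u⟫ - ⟪p.1, p.2⟫ :=
    fun p x u => by rw [hLdef]
  -- L at a graph point is at most the pairing
  have hLle : ∀ (p : S) (y w : H), w ∈ A y → L p.1 y w ≤ ⟪y, w⟫ := by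
    intro p y w hw
    have h0 := hmono y p.1.1 w p.1.2 hw p.2
    have hid : ⟪w - p.1.2, y - p.1.1⟫
        = ⟪y, w⟫ - (⟪y, p.1.2⟫ + ⟪p.1.1, w⟫ - ⟪p.1.1, p.1.2⟫) := by
      simp only [inner_sub_left, inner_sub_right]
      rw [real_inner_comm w y, real_inner_comm w p.1.1, real_inner_comm p.1.2 y,
        real_inner_comm p.1.2 p.1.1]
      ring
    simp only [hLdef]
    linarith [hid ▸ h0]
  have hmemD : ∀ y w : H, w ∈ A y → ((y, w) : H × H) ∈ D := by
    intro y w hw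
    rw [hDdef]
    exact ⟨⟪y, w⟫, by rintro r ⟨p, rfl⟩; exact hLle p y w hw⟩
  have hFle : ∀ z ∈ D, ∀ p : S, L p.1 z.1 z.2 ≤ F z.1 z.2 := by
    intro z hz p
    rw [hDdef] at hz
    conv_rhs => rw [hFdef]
    exact le_ciSup hz p
  -- lower bound
  have hlb : ∀ z ∈ D, -(‖p₀.1 + p₀.2‖ ^ 2 / 2) ≤ F z.1 z.2 + q z.1 z.2 := by
    intro z hz
    have h1 := hFle z hz ⟨p₀, hp₀⟩
    have e1 : ‖z.1 + p₀.2‖ ^ 2 = ‖z.1‖ ^ 2 + 2 * ⟪z.1, p₀.2⟫ + ‖p₀.2‖ ^ 2 :=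
      norm_add_sq_real z.1 p₀.2
    have e2 : ‖z.2 + p₀.1‖ ^ 2 = ‖z.2‖ ^ 2 + 2 * ⟪z.2, p₀.1⟫ + ‖p₀.1‖ ^ 2 :=
      norm_add_sq_real z.2 p₀.1
    have e3 : ‖p₀.1 + p₀.2‖ ^ 2 = ‖p₀.1‖ ^ 2 + 2 * ⟪p₀.1, p₀.2⟫ + ‖p₀.2‖ ^ 2 :=
      norm_add_sq_real p₀.1 p₀.2
    have e4 : ⟪p₀.1, z.2⟫ = ⟪z.2, p₀.1⟫ := real_inner_comm _ _
    rw [hLdef] at h1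
    rw [hqdef]
    dsimp only at h1 ⊢
    nlinarith [sq_nonneg ‖z.1 + p₀.2‖, sq_nonneg ‖z.2 + p₀.1‖]
  set E : Set ℝ := {r : ℝ | ∃ z ∈ D, F z.1 z.2 + q z.1 z.2 = r} with hEdef
  have hEne : E.Nonempty := ⟨_, ⟨(p₀.1, p₀.2), hmemD p₀.1 p₀.2 hp₀, rfl⟩⟩
  have hEbd : BddBelow E := by
    refine ⟨-(‖p₀.1 + p₀.2‖ ^ 2 / 2), ?_⟩
    rintro r ⟨z, hz, rfl⟩
    exact hlb z hz
  set c : ℝ := sInf E with hcdef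
  clear_value E c
  have hcle : ∀ z ∈ D, c ≤ F z.1 z.2 + q z.1 z.2 := by
    intro z hz
    rw [hcdef]
    exact csInf_le hEbd (by rw [hEdef]; exact ⟨z, hz, rfl⟩)
  -- minimizing sequence
  have hseq : ∀ n : ℕ, ∃ z, z ∈ D ∧ F z.1 z.2 + q z.1 z.2 < c + 1 / (n + 1) := by
    intro n
    have hlt : c < c + 1 / ((n : ℝ) + 1) := by
      have : (0 : ℝ) < 1 / ((n : ℝ) + 1) := by positivity
      linarith
    obtain ⟨r, hrE, hrlt⟩ := exists_lt_of_csInf_lt hEne (by rw [← hcdef]; exact hlt)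
    rw [hEdef] at hrE
    obtain ⟨z, hz, rfl⟩ := hrE
    exact ⟨z, hz, hrlt⟩
  choose zs hzsD hzslt using hseq
  -- midpoint estimate
  have hmid : ∀ z ∈ D, ∀ z' ∈ D,
      ‖z.1 - z'.1‖ ^ 2 + ‖z.2 - z'.2‖ ^ 2 ≤
        8 * ((F z.1 z.2 + q z.1 z.2) / 2 + (F z'.1 z'.2 + q z'.1 z'.2) / 2 - c) := by
    intro z hz z' hz'
    set xm : H := (2 : ℝ)⁻¹ • (z.1 + z'.1) with hxm
    set um : H := (2 : ℝ)⁻¹ • (z.2 + z'.2) with hum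
    have hLaff : ∀ p : S, L p.1 xm um = L p.1 z.1 z.2 / 2 + L p.1 z'.1 z'.2 / 2 := by
      intro p
      rw [hLdef]
      dsimp only
      rw [hxm, hum]
      simp only [inner_add_left, inner_add_right, real_inner_smul_left, real_inner_smul_right]
      ring
    have hmemDm : (xm, um) ∈ D := by
      rw [hDdef]
      refine ⟨F z.1 z.2 / 2 + F z'.1 z'.2 / 2, ?_⟩
      rintro r ⟨p, rfl⟩
      have h1 := hFle z hz p
      have h2 := hFle z' hz' p
      have h3 := hLaff p
      dsimp only at h3 ⊢
      rw [h3]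
      have h4 : L (p : H × H) z.1 z.2 / 2 ≤ F z.1 z.2 / 2 := by linarith
      have h5 : L (p : H × H) z'.1 z'.2 / 2 ≤ F z'.1 z'.2 / 2 := by linarith
      exact add_le_add h4 h5
    have hFm : F xm um ≤ F z.1 z.2 / 2 + F z'.1 z'.2 / 2 := by
      conv_lhs => rw [hFdef]
      apply ciSup_le
      intro p
      rw [hLaff p]
      have h1 := hFle z hz p
      have h2 := hFle z' hz' p
      have h4 : L (p : H × H) z.1 z.2 / 2 ≤ F z.1 z.2 / 2 := by linarith
      have h5 : L (p : H × H) z'.1 z'.2 / 2 ≤ F z'.1 z'.2 / 2 := by linarith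
      exact add_le_add h4 h5
    have hqm : q xm um = q z.1 z.2 / 2 + q z'.1 z'.2 / 2
        - (‖z.1 - z'.1‖ ^ 2 + ‖z.2 - z'.2‖ ^ 2) / 8 := by
      have par1 : ‖z.1 + z'.1‖ ^ 2 + ‖z.1 - z'.1‖ ^ 2 = 2 * ‖z.1‖ ^ 2 + 2 * ‖z'.1‖ ^ 2 := by
        have := norm_add_sq_real z.1 z'.1
        have := norm_sub_sq_real z.1 z'.1
        linarith
      have par2 : ‖z.2 + z'.2‖ ^ 2 + ‖z.2 - z'.2‖ ^ 2 = 2 * ‖z.2‖ ^ 2 + 2 * ‖z'.2‖ ^ 2 := by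
        have := norm_add_sq_real z.2 z'.2
        have := norm_sub_sq_real z.2 z'.2
        linarith
      have e1 : ‖xm‖ ^ 2 = ‖z.1 + z'.1‖ ^ 2 / 4 := by
        rw [hxm, norm_smul]
        norm_num
        ring
      have e2 : ‖um‖ ^ 2 = ‖z.2 + z'.2‖ ^ 2 / 4 := by
        rw [hum, norm_smul]
        norm_num
        ring
      rw [hq1, hq1, hq1]
      rw [e1, e2]
      linarith
    have hc := hcle (xm, um) hmemDm
    dsimp only at hc
    rw [hqm] at hc
    linarith
  -- the minimizing sequence is Cauchy
  set xs : ℕ → H := fun n => (zs n).1 with hxs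
  set us : ℕ → H := fun n => (zs n).2 with hus
  have hkey : ∀ N n k : ℕ, N ≤ n → N ≤ k →
      ‖xs n - xs k‖ ^ 2 + ‖us n - us k‖ ^ 2 ≤ 8 / (N + 1) := by
    intro N n k hn hk
    have h1 := hmid (zs n) (hzsD n) (zs k) (hzsD k)
    have h2 := hzslt n
    have h3 := hzslt k
    have hn' : 1 / ((n : ℝ) + 1) ≤ 1 / ((N : ℝ) + 1) := by
      apply one_div_le_one_div_of_le (by positivity)
      have : (N : ℝ) ≤ (n : ℝ) := Nat.cast_le.mpr hn
      linarith
    have hk' : 1 / ((k : ℝ) + 1) ≤ 1 / ((N : ℝ) + 1) := by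
      apply one_div_le_one_div_of_le (by positivity)
      have : (N : ℝ) ≤ (k : ℝ) := Nat.cast_le.mpr hk
      linarith
    have h8 : 8 / ((N : ℝ) + 1) = 4 * (1 / ((N : ℝ) + 1)) + 4 * (1 / ((N : ℝ) + 1)) := by
      ring
    rw [h8]
    rw [hxs, hus]
    dsimp only
    linarith
  have htendsqrt : Filter.Tendsto (fun N : ℕ => Real.sqrt (8 / (N + 1))) Filter.atTop (nhds 0) := by
    have h0 : Filter.Tendsto (fun N : ℕ => 8 / ((N : ℝ) + 1)) Filter.atTop (nhds 0) := by
      have h8 := tendsto_const_div_atTop_nhds_zero_nat (8 : ℝ)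
      have hsub := h8.comp (Filter.tendsto_add_atTop_nat 1)
      have heq : (fun n : ℕ => (8 : ℝ) / (n : ℝ)) ∘ (fun a => a + 1) = fun N : ℕ => (8 : ℝ) / ((N : ℝ) + 1) := by
        funext n
        simp [Function.comp]
      rwa [heq] at hsub
    have h1 := (Real.continuous_sqrt.tendsto 0).comp h0
    rw [Real.sqrt_zero] at h1
    exact h1
  have hsqrt_bound : ∀ (v : H) (N : ℕ) (r : ℝ), ‖v‖ ^ 2 ≤ r → ‖v‖ ≤ Real.sqrt r := by
    intro v N r h
    have := Real.sqrt_le_sqrt h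
    rwa [Real.sqrt_sq (norm_nonneg _)] at this
  have hcx : CauchySeq xs := by
    apply cauchySeq_of_le_tendsto_0 (fun N : ℕ => Real.sqrt (8 / ((N : ℝ) + 1))) _ htendsqrt
    intro n k N hn hk
    rw [dist_eq_norm]
    refine hsqrt_bound _ N _ ?_
    have := hkey N n k hn hk
    nlinarith [sq_nonneg ‖us n - us k‖]
  have hcu : CauchySeq us := by
    apply cauchySeq_of_le_tendsto_0 (fun N : ℕ => Real.sqrt (8 / ((N : ℝ) + 1))) _ htendsqrt
    intro n k N hn hk
    rw [dist_eq_norm]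
    refine hsqrt_bound _ N _ ?_
    have := hkey N n k hn hk
    nlinarith [sq_nonneg ‖xs n - xs k‖]
  obtain ⟨xb, hxb⟩ := cauchySeq_tendsto_of_complete hcx
  obtain ⟨ub, hub⟩ := cauchySeq_tendsto_of_complete hcu
  -- the limit is a minimizer
  have hLq : ∀ p : S, ∀ n : ℕ, L p.1 (xs n) (us n) + q (xs n) (us n) < c + 1 / (n + 1) := by
    intro p n
    have h1 := hFle (zs n) (hzsD n) p
    have h2 := hzslt n
    rw [hxs, hus]
    dsimp only
    linarith
  have hlim : ∀ p : S, L p.1 xb ub + q xb ub ≤ c := by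
    intro p
    have htf : Filter.Tendsto (fun n => L p.1 (xs n) (us n) + q (xs n) (us n))
        Filter.atTop (nhds (L p.1 xb ub + q xb ub)) := by
      simp only [hL1, hq1]
      exact (((hxb.inner tendsto_const_nhds).add (tendsto_const_nhds.inner hub)).sub
        tendsto_const_nhds).add
        (((hxb.norm.pow 2).div_const 2).add ((hub.norm.pow 2).div_const 2))
    have htg : Filter.Tendsto (fun n : ℕ => c + 1 / ((n : ℝ) + 1)) Filter.atTop (nhds c) := by
      
      have h8 := tendsto_const_div_atTop_nhds_zero_nat (1 : ℝ)
      have hsub := h8.comp (Filter.tendsto_add_atTop_nat 1)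
      have := hsub.const_add c
      simpa using this
    exact le_of_tendsto_of_tendsto' htf htg fun n => le_of_lt (hLq p n)
  have hzbD : ((xb, ub) : H × H) ∈ D := by
    rw [hDdef]
    exact ⟨c - q xb ub, by rintro r ⟨p, rfl⟩; linarith [hlim p]⟩
  have hc1 : F xb ub + q xb ub ≤ c := by
    have hF : F xb ub ≤ c - q xb ub := by
      conv_lhs => rw [hFdef]
      exact ciSup_le fun p => by linarith [hlim p]
    linarith
  have hc2 : c ≤ F xb ub + q xb ub := hcle (xb, ub) hzbD
  -- first-order optimality at the minimizer
  have esq : ∀ (t : ℝ) (v : H), ‖t • v‖ ^ 2 = t ^ 2 * ‖v‖ ^ 2 := by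
    intro t v
    rw [norm_smul, mul_pow, Real.norm_eq_abs, sq_abs]
  have hstar : ∀ y w : H, w ∈ A y →
      F xb ub ≤ ⟪y, w⟫ + (⟪xb, y - xb⟫ + ⟪ub, w - ub⟫) := by
    intro y w hw
    have hK0 : (0 : ℝ) ≤ (‖y - xb‖ ^ 2 + ‖w - ub‖ ^ 2) / 2 := by positivity
    have haux := aux_nonneg (⟪y, w⟫ + (⟪xb, y - xb⟫ + ⟪ub, w - ub⟫) - F xb ub)
      ((‖y - xb‖ ^ 2 + ‖w - ub‖ ^ 2) / 2) hK0
    have hmain : ∀ t : ℝ, 0 < t → t ≤ 1 →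
        0 ≤ (⟪y, w⟫ + (⟪xb, y - xb⟫ + ⟪ub, w - ub⟫) - F xb ub)
          + t * ((‖y - xb‖ ^ 2 + ‖w - ub‖ ^ 2) / 2) := by
      intro t ht0 ht1
      set zt1 : H := xb + t • (y - xb) with hzt1
      set zt2 : H := ub + t • (w - ub) with hzt2
      have hLt : ∀ p : S, L p.1 zt1 zt2 = (1 - t) * L p.1 xb ub + t * L p.1 y w := by
        intro p
        rw [hL1, hL1, hL1, hzt1, hzt2]
        simp only [inner_add_left, inner_add_right, real_inner_smul_left,
          real_inner_smul_right, inner_sub_left, inner_sub_right]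
        ring
      have hub_bound : ∀ p : S, L p.1 zt1 zt2 ≤ (1 - t) * F xb ub + t * ⟪y, w⟫ := by
        intro p
        rw [hLt p]
        have h1 := hFle (xb, ub) hzbD p
        have h2 := hLle p y w hw
        have h3 : (1 - t) * L p.1 xb ub ≤ (1 - t) * F xb ub :=
          mul_le_mul_of_nonneg_left h1 (by linarith)
        have h4 : t * L p.1 y w ≤ t * ⟪y, w⟫ :=
          mul_le_mul_of_nonneg_left h2 (le_of_lt ht0)
        linarith
      have hmemDt : ((zt1, zt2) : H × H) ∈ D := by
        rw [hDdef]
        exact ⟨(1 - t) * F xb ub + t * ⟪y, w⟫, by rintro r ⟨p, rfl⟩; exact hub_bound p⟩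
      have hFt : F zt1 zt2 ≤ (1 - t) * F xb ub + t * ⟪y, w⟫ := by
        conv_lhs => rw [hFdef]
        exact ciSup_le hub_bound
      have hqt : q zt1 zt2 = q xb ub + t * (⟪xb, y - xb⟫ + ⟪ub, w - ub⟫)
          + t ^ 2 * ((‖y - xb‖ ^ 2 + ‖w - ub‖ ^ 2) / 2) := by
        rw [hq1, hq1, hzt1, hzt2]
        rw [norm_add_sq_real, norm_add_sq_real, real_inner_smul_right, real_inner_smul_right,
          esq, esq]
        ring
      have hchain := hcle (zt1, zt2) hmemDt
      dsimp only at hchain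
      rw [hqt] at hchain
      have hexp1 : (1 - t) * F xb ub = F xb ub - t * F xb ub := by ring
      have hstep : 0 ≤ t * ⟪y, w⟫ + t * (⟪xb, y - xb⟫ + ⟪ub, w - ub⟫) - t * F xb ub
          + t ^ 2 * ((‖y - xb‖ ^ 2 + ‖w - ub‖ ^ 2) / 2) := by linarith
      have hexp2 : t * ((⟪y, w⟫ + (⟪xb, y - xb⟫ + ⟪ub, w - ub⟫) - F xb ub)
          + t * ((‖y - xb‖ ^ 2 + ‖w - ub‖ ^ 2) / 2))
          = t * ⟪y, w⟫ + t * (⟪xb, y - xb⟫ + ⟪ub, w - ub⟫) - t * F xb ub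
          + t ^ 2 * ((‖y - xb‖ ^ 2 + ‖w - ub‖ ^ 2) / 2) := by ring
      have hmul : t * 0 ≤ t * ((⟪y, w⟫ + (⟪xb, y - xb⟫ + ⟪ub, w - ub⟫) - F xb ub)
          + t * ((‖y - xb‖ ^ 2 + ‖w - ub‖ ^ 2) / 2)) := by
        rw [hexp2]
        linarith
      exact (mul_le_mul_iff_right₀ ht0).mp hmul
    linarith [haux hmain]
  have hFge : ⟪xb, ub⟫ ≤ F xb ub := by
    by_contra hcon
    push_neg at hcon
    have hmem : ub ∈ A xb := by
      apply hmax
      intro y v hv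
      have h1 : L ((y, v) : H × H) xb ub ≤ F xb ub := hFle (xb, ub) hzbD ⟨(y, v), hv⟩
      rw [hL1] at h1
      dsimp only at h1
      have hid : ⟪ub - v, xb - y⟫ = ⟪xb, ub⟫ - (⟪xb, v⟫ + ⟪y, ub⟫ - ⟪y, v⟫) := by
        simp only [inner_sub_left, inner_sub_right]
        rw [real_inner_comm ub xb, real_inner_comm ub y, real_inner_comm v xb,
          real_inner_comm v y]
        ring
      rw [hid]
      linarith
    have h2 := hFle (xb, ub) hzbD ⟨(xb, ub), hmem⟩
    rw [hL1] at h2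
    dsimp only at h2
    linarith
  have hrel : ∀ y v : H, v ∈ A y → ⟪-xb - v, -ub - y⟫ ≥ 0 := by
    intro y v hv
    by_contra hcon
    push_neg at hcon
    have h1 := hstar y v hv
    have e1 : ⟪-xb - v, -ub - y⟫ = ⟪xb, ub⟫ + ⟪xb, y⟫ + ⟪v, ub⟫ + ⟪v, y⟫ := by
      simp only [inner_sub_left, inner_sub_right, inner_neg_left, inner_neg_right]
      ring
    have e2 : ⟪xb, y - xb⟫ = ⟪xb, y⟫ - ‖xb‖ ^ 2 := by
      rw [inner_sub_right, real_inner_self_eq_norm_sq]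
    have e3 : ⟪ub, v - ub⟫ = ⟪ub, v⟫ - ‖ub‖ ^ 2 := by
      rw [inner_sub_right, real_inner_self_eq_norm_sq]
    have e4 : ‖xb + ub‖ ^ 2 = ‖xb‖ ^ 2 + 2 * ⟪xb, ub⟫ + ‖ub‖ ^ 2 := norm_add_sq_real xb ub
    have e5 : ⟪ub, v⟫ = ⟪v, ub⟫ := real_inner_comm _ _
    have e6 : ⟪y, v⟫ = ⟪v, y⟫ := real_inner_comm _ _
    rw [e1] at hcon
    rw [e2, e3] at h1
    nlinarith [sq_nonneg ‖xb + ub‖]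
  have hmem2 : -xb ∈ A (-ub) := hmax (-ub) (-xb) hrel
  have h2 := hstar (-ub) (-xb) hmem2
  have e7 : ⟪(-ub : H), (-xb : H)⟫ = ⟪xb, ub⟫ := by
    rw [inner_neg_left, inner_neg_right, neg_neg, real_inner_comm]
  have e8 : ⟪xb, -ub - xb⟫ = -⟪xb, ub⟫ - ‖xb‖ ^ 2 := by
    rw [inner_sub_right, inner_neg_right, real_inner_self_eq_norm_sq]
  have e9 : ⟪ub, -xb - ub⟫ = -⟪xb, ub⟫ - ‖ub‖ ^ 2 := by
    rw [inner_sub_right, inner_neg_right, real_inner_self_eq_norm_sq, real_inner_comm ub xb]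
  have e4 : ‖xb + ub‖ ^ 2 = ‖xb‖ ^ 2 + 2 * ⟪xb, ub⟫ + ‖ub‖ ^ 2 := norm_add_sq_real xb ub
  rw [e7, e8, e9] at h2
  have hzero : ‖xb + ub‖ ^ 2 ≤ 0 := by linarith
  have h0 : ‖xb + ub‖ ^ 2 = 0 := le_antisymm hzero (sq_nonneg _)
  have h0' : ‖xb + ub‖ = 0 := pow_eq_zero_iff (by norm_num : (2 : ℕ) ≠ 0) |>.mp h0
  have hsum0 : xb + ub = 0 := norm_eq_zero.mp h0'
  refine ⟨-ub, -xb, hmem2, ?_⟩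
  have : -ub + -xb = -(xb + ub) := by
    rw [neg_add_rev]
  rw [this, hsum0, neg_zero]

private theorem minty {H : Type*} [NormedAddCommGroup H] [InnerProductSpace ℝ H]
    [CompleteSpace H] (A : H → Set H)
    (hmono : ∀ x y u v : H, u ∈ A x → v ∈ A y → ⟪u - v, x - y⟫ ≥ 0)
    (hmax : ∀ x u : H, (∀ y v : H, v ∈ A y → ⟪u - v, x - y⟫ ≥ 0) → u ∈ A x)
    (p : H) : ∃ x w : H, w ∈ A x ∧ x + w = p := by
  set A' : H → Set H := fun y => {w : H | w + p ∈ A y} with hA'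
  have hmono' : ∀ x y u v : H, u ∈ A' x → v ∈ A' y → ⟪u - v, x - y⟫ ≥ 0 := by
    intro x y u v hu hv
    have h1 := hmono x y (u + p) (v + p) hu hv
    have e : (u + p) - (v + p) = u - v := by abel
    rwa [e] at h1
  have hmax' : ∀ x u : H, (∀ y v : H, v ∈ A' y → ⟪u - v, x - y⟫ ≥ 0) → u ∈ A' x := by
    intro x u h
    show u + p ∈ A x
    apply hmax x (u + p)
    intro y v hv
    have h2 := h y (v - p) (by show (v - p) + p ∈ A y; rwa [sub_add_cancel])
    have e : u - (v - p) = (u + p) - v := by abel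
    rwa [e] at h2
  obtain ⟨x, u, hu, hsum⟩ := minty0 A' hmono' hmax'
  refine ⟨x, u + p, hu, ?_⟩
  rw [← add_assoc, hsum, zero_add]

set_option maxHeartbeats 1000000 in
private theorem sum_max {H : Type*} [NormedAddCommGroup H] [InnerProductSpace ℝ H]
    [CompleteSpace H] (A : H → Set H)
    (hmono : ∀ x y u v : H, u ∈ A x → v ∈ A y → ⟪u - v, x - y⟫ ≥ 0)
    (hmax : ∀ x u : H, (∀ y v : H, v ∈ A y → ⟪u - v, x - y⟫ ≥ 0) → u ∈ A x)
    (N : H → H) (hNcont : Continuous N)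
    (x u : H) (h : ∀ y w : H, w ∈ A y → ⟪u - (N y + w), x - y⟫ ≥ 0) :
    u - N x ∈ A x := by
  classical
  -- resolvent points
  have hres : ∀ n : ℕ, ∃ ξ b : H, b ∈ A ξ ∧
      ξ + (((n : ℝ) + 1)⁻¹) • b = x + (((n : ℝ) + 1)⁻¹) • (u - N x) := by
    intro n
    set lam : ℝ := ((n : ℝ) + 1)⁻¹ with hlam
    have hlampos : 0 < lam := by positivity
    have hlamne : lam ≠ 0 := ne_of_gt hlampos
    set B : H → Set H := fun y => {w : H | lam⁻¹ • w ∈ A y} with hB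
    have hmonoB : ∀ a b' c d : H, c ∈ B a → d ∈ B b' → ⟪c - d, a - b'⟫ ≥ 0 := by
      intro a b' c d hc hd
      have h1 := hmono a b' (lam⁻¹ • c) (lam⁻¹ • d) hc hd
      have e : c - d = lam • (lam⁻¹ • c - lam⁻¹ • d) := by
        rw [smul_sub, smul_smul, smul_smul, mul_inv_cancel₀ hlamne, one_smul, one_smul]
      rw [e, real_inner_smul_left]
      exact mul_nonneg (le_of_lt hlampos) h1
    have hmaxB : ∀ a c : H, (∀ b' d : H, d ∈ B b' → ⟪c - d, a - b'⟫ ≥ 0) → c ∈ B a := by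
      intro a c hc
      show lam⁻¹ • c ∈ A a
      apply hmax
      intro y v hv
      have h2 := hc y (lam • v)
        (by show lam⁻¹ • lam • v ∈ A y; rwa [smul_smul, inv_mul_cancel₀ hlamne, one_smul])
      have e : lam⁻¹ • c - v = lam⁻¹ • (c - lam • v) := by
        rw [smul_sub, smul_smul, inv_mul_cancel₀ hlamne, one_smul]
      rw [e, real_inner_smul_left]
      exact mul_nonneg (le_of_lt (by positivity)) h2
    obtain ⟨ξ, w', hw', hsum⟩ := minty B hmonoB hmaxB (x + lam • (u - N x))
    refine ⟨ξ, lam⁻¹ • w', hw', ?_⟩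
    rw [smul_smul, mul_inv_cancel₀ hlamne, one_smul]
    exact hsum
  choose ξs bs hbs heq using hres
  -- explicit formula for bs
  have hb : ∀ n : ℕ, bs n = ((n : ℝ) + 1) • (x - ξs n) + (u - N x) := by
    intro n
    have hne : ((n : ℝ) + 1) ≠ 0 := by positivity
    have e : (((n : ℝ) + 1)⁻¹) • bs n = (x - ξs n) + (((n : ℝ) + 1)⁻¹) • (u - N x) := by
      calc (((n : ℝ) + 1)⁻¹) • bs n
          = (ξs n + (((n : ℝ) + 1)⁻¹) • bs n) - ξs n := by abel
        _ = (x + (((n : ℝ) + 1)⁻¹) • (u - N x)) - ξs n := by rw [heq n]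
        _ = (x - ξs n) + (((n : ℝ) + 1)⁻¹) • (u - N x) := by abel
    calc bs n = ((n : ℝ) + 1) • ((((n : ℝ) + 1)⁻¹) • bs n) := by
          rw [smul_smul, mul_inv_cancel₀ hne, one_smul]
      _ = ((n : ℝ) + 1) • ((x - ξs n) + (((n : ℝ) + 1)⁻¹) • (u - N x)) := by rw [e]
      _ = ((n : ℝ) + 1) • (x - ξs n) + (u - N x) := by
          rw [smul_add, smul_smul, mul_inv_cancel₀ hne, one_smul]
  -- step 1 : the key inequality from h
  have hstep1 : ∀ n : ℕ, ‖x - ξs n‖ ≤ (((n : ℝ) + 1)⁻¹) * ‖N x - N (ξs n)‖ ∧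
      ‖bs n - (u - N x)‖ ≤ ‖N x - N (ξs n)‖ := by
    intro n
    have hspos : (0 : ℝ) < (n : ℝ) + 1 := by positivity
    have hh := h (ξs n) (bs n) (hbs n)
    have e2 : u - (N (ξs n) + bs n)
        = (N x - N (ξs n)) - ((n : ℝ) + 1) • (x - ξs n) := by
      rw [hb n]; abel
    rw [e2, inner_sub_left, real_inner_smul_left, real_inner_self_eq_norm_sq] at hh
    have hcs := real_inner_le_norm (N x - N (ξs n)) (x - ξs n)
    -- main scalar inequality
    have hA : ((n : ℝ) + 1) * ‖x - ξs n‖ ≤ ‖N x - N (ξs n)‖ := by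
      rcases eq_or_lt_of_le (norm_nonneg (x - ξs n)) with h0 | h0
      · rw [← h0, mul_zero]
        exact norm_nonneg _
      · apply (mul_le_mul_iff_left₀ h0).mp
        calc ((n : ℝ) + 1) * ‖x - ξs n‖ * ‖x - ξs n‖
            = ((n : ℝ) + 1) * ‖x - ξs n‖ ^ 2 := by ring
          _ ≤ ⟪N x - N (ξs n), x - ξs n⟫ := by linarith
          _ ≤ ‖N x - N (ξs n)‖ * ‖x - ξs n‖ := hcs
    constructor
    · have h5 : (((n : ℝ) + 1)⁻¹) * (((n : ℝ) + 1) * ‖x - ξs n‖) ≤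
          (((n : ℝ) + 1)⁻¹) * ‖N x - N (ξs n)‖ :=
        mul_le_mul_of_nonneg_left hA (by positivity)
      rw [← mul_assoc, inv_mul_cancel₀ (ne_of_gt hspos), one_mul] at h5
      exact h5
    · have e3 : bs n - (u - N x) = ((n : ℝ) + 1) • (x - ξs n) := by rw [hb n]; abel
      rw [e3, norm_smul, Real.norm_eq_abs, abs_of_pos hspos]
      exact hA
  -- step 2 : monotone comparison between resolvent points
  have hstep2 : ∀ n k : ℕ, n ≤ k →
      ‖ξs n - ξs k‖ ^ 2 ≤ ‖x - ξs n‖ ^ 2 - ‖x - ξs k‖ ^ 2 := by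
    intro n k hnk
    have hs : (0 : ℝ) < (n : ℝ) + 1 := by positivity
    have ht : (0 : ℝ) < (k : ℝ) + 1 := by positivity
    have hst : (n : ℝ) + 1 ≤ (k : ℝ) + 1 := by
      have : (n : ℝ) ≤ (k : ℝ) := Nat.cast_le.mpr hnk
      linarith
    have hmono2 := hmono (ξs n) (ξs k) (bs n) (bs k) (hbs n) (hbs k)
    have e1 : bs n - bs k = ((n : ℝ) + 1) • (x - ξs n) - ((k : ℝ) + 1) • (x - ξs k) := by
      rw [hb n, hb k]; abel
    have e2 : ξs n - ξs k = (x - ξs k) - (x - ξs n) := by abel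
    rw [e1, e2] at hmono2
    have hexp : ∀ a b : H, ⟪((n : ℝ) + 1) • a - ((k : ℝ) + 1) • b, b - a⟫
        = ((n : ℝ) + 1) * ⟪a, b⟫ - ((n : ℝ) + 1) * ⟪a, a⟫
          - ((k : ℝ) + 1) * ⟪b, b⟫ + ((k : ℝ) + 1) * ⟪a, b⟫ := by
      intro a b
      simp only [inner_sub_left, inner_sub_right, real_inner_smul_left]
      rw [real_inner_comm b a]
      ring
    rw [hexp, real_inner_self_eq_norm_sq, real_inner_self_eq_norm_sq] at hmono2
    have hcs := real_inner_le_norm (x - ξs n) (x - ξs k)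
    have hba : ‖x - ξs k‖ ≤ ‖x - ξs n‖ := by
      by_contra hcon
      push_neg at hcon
      have key : 0 < (‖x - ξs k‖ - ‖x - ξs n‖) *
          (((k : ℝ) + 1) * ‖x - ξs k‖ - ((n : ℝ) + 1) * ‖x - ξs n‖) := by
        apply mul_pos (by linarith)
        have h1 : ((n : ℝ) + 1) * ‖x - ξs k‖ ≤ ((k : ℝ) + 1) * ‖x - ξs k‖ :=
          mul_le_mul_of_nonneg_right hst (norm_nonneg _)
        have h2 : ((n : ℝ) + 1) * ‖x - ξs n‖ < ((n : ℝ) + 1) * ‖x - ξs k‖ :=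
          (mul_lt_mul_iff_right₀ hs).mpr hcon
        linarith
      nlinarith [key, hmono2, hcs,
        mul_le_mul_of_nonneg_left hcs (le_of_lt hs),
        mul_le_mul_of_nonneg_left hcs (le_of_lt ht)]
    have hnanb : ‖x - ξs k‖ ^ 2 ≤ ‖x - ξs n‖ ^ 2 :=
      pow_le_pow_left₀ (norm_nonneg _) hba 2
    have hip : ‖x - ξs k‖ ^ 2 ≤ ⟪x - ξs n, x - ξs k⟫ := by
      have hsum : (0 : ℝ) < ((n : ℝ) + 1) + ((k : ℝ) + 1) := by positivity
      apply (mul_le_mul_iff_right₀ hsum).mp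
      nlinarith [hmono2, mul_le_mul_of_nonneg_left hnanb (le_of_lt hs)]
    have e3 : ‖ξs n - ξs k‖ ^ 2 = ‖(x - ξs k) - (x - ξs n)‖ ^ 2 := by rw [← e2]
    rw [e3, norm_sub_sq_real]
    have ecomm2 : ⟪x - ξs k, x - ξs n⟫ = ⟪x - ξs n, x - ξs k⟫ := real_inner_comm _ _
    rw [ecomm2]
    linarith
  -- the sequence ξs is Cauchy
  set ss : ℕ → ℝ := fun n => ‖x - ξs n‖ ^ 2 with hss
  have hmono_ss : ∀ n k : ℕ, n ≤ k → ss k ≤ ss n := by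
    intro n k hnk
    have h1 := hstep2 n k hnk
    have h2 := sq_nonneg ‖ξs n - ξs k‖
    simp only [hss]
    linarith
  have hbdd : BddBelow (Set.range ss) := ⟨0, by rintro r ⟨n, rfl⟩; positivity⟩
  have hconv : Filter.Tendsto ss Filter.atTop (nhds (⨅ n, ss n)) :=
    tendsto_atTop_ciInf (fun n k hnk => hmono_ss n k hnk) hbdd
  have hlbi : ∀ k : ℕ, ⨅ n, ss n ≤ ss k := fun k => ciInf_le hbdd k
  have hcauchy : CauchySeq ξs := by
    apply cauchySeq_of_le_tendsto_0 (fun N : ℕ => Real.sqrt (ss N - ⨅ n, ss n)) _ ?_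
    · intro n k N hn hk
      have hbound : ∀ a b : ℕ, N ≤ a → N ≤ b → a ≤ b → dist (ξs a) (ξs b) ≤
          Real.sqrt (ss N - ⨅ n, ss n) := by
        intro a b ha hb hab
        rw [dist_eq_norm]
        have h1 := hstep2 a b hab
        have h2 := hmono_ss N a ha
        have h3 := hlbi b
        have h4 : ‖ξs a - ξs b‖ ^ 2 ≤ ss N - ⨅ n, ss n := by
          simp only [hss] at h1 h2 h3 ⊢
          linarith
        have := Real.sqrt_le_sqrt h4
        rwa [Real.sqrt_sq (norm_nonneg _)] at this
      rcases le_total n k with hh' | hh'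
      · exact hbound n k hn hk hh'
      · rw [dist_comm]
        exact hbound k n hk hn hh'
    · have h1 : Filter.Tendsto (fun N : ℕ => ss N - ⨅ n, ss n) Filter.atTop (nhds 0) := by
        have := hconv.sub_const (⨅ n, ss n)
        simpa using this
      have h2 := (Real.continuous_sqrt.tendsto 0).comp h1
      rw [Real.sqrt_zero] at h2
      exact h2
  obtain ⟨ξ0, hξ0⟩ := cauchySeq_tendsto_of_complete hcauchy
  -- ξs converges to x
  have hNlim : Filter.Tendsto (fun n => ‖N x - N (ξs n)‖) Filter.atTop
      (nhds ‖N x - N ξ0‖) :=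
    (tendsto_const_nhds.sub ((hNcont.tendsto ξ0).comp hξ0)).norm
  have hlam0 : Filter.Tendsto (fun n : ℕ => ((n : ℝ) + 1)⁻¹) Filter.atTop (nhds 0) := by
    have h8 := tendsto_const_div_atTop_nhds_zero_nat (1 : ℝ)
    have hsub := h8.comp (Filter.tendsto_add_atTop_nat 1)
    have heq2 : (fun n : ℕ => (1 : ℝ) / (n : ℝ)) ∘ (fun a => a + 1)
        = fun N : ℕ => ((N : ℝ) + 1)⁻¹ := by
      funext n
      simp [Function.comp, one_div]
    rwa [heq2] at hsub
  have hnormlim : Filter.Tendsto (fun n => ‖x - ξs n‖) Filter.atTop (nhds 0) := by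
    have hprod := hlam0.mul hNlim
    rw [zero_mul] at hprod
    exact squeeze_zero (fun n => norm_nonneg _) (fun n => (hstep1 n).1) hprod
  have hxi_to_x : Filter.Tendsto ξs Filter.atTop (nhds x) := by
    rw [tendsto_iff_norm_sub_tendsto_zero]
    have : (fun n => ‖ξs n - x‖) = fun n => ‖x - ξs n‖ := by
      funext n
      rw [norm_sub_rev]
    rw [this]
    exact hnormlim
  have hξ0x : ξ0 = x := tendsto_nhds_unique hξ0 hxi_to_x
  have hNxi : Filter.Tendsto (fun n => ‖N x - N (ξs n)‖) Filter.atTop (nhds 0) := by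
    rw [hξ0x, sub_self, norm_zero] at hNlim
    exact hNlim
  have hb_to_q : Filter.Tendsto bs Filter.atTop (nhds (u - N x)) := by
    rw [tendsto_iff_norm_sub_tendsto_zero]
    exact squeeze_zero (fun n => norm_nonneg _) (fun n => (hstep1 n).2) hNxi
  -- conclusion via maximality
  apply hmax
  intro y w hw
  have hin : ∀ n : ℕ, ⟪bs n - w, ξs n - y⟫ ≥ 0 := fun n =>
    hmono (ξs n) y (bs n) w (hbs n) hw
  have htends : Filter.Tendsto (fun n => ⟪bs n - w, ξs n - y⟫) Filter.atTop
      (nhds ⟪(u - N x) - w, x - y⟫) :=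
    (hb_to_q.sub tendsto_const_nhds).inner (hxi_to_x.sub tendsto_const_nhds)
  exact ge_of_tendsto htends (Filter.Eventually.of_forall hin)

set_option maxHeartbeats 1000000 in
theorem stmt4 {H : Type*} [NormedAddCommGroup H] [InnerProductSpace ℝ H] [CompleteSpace H]
    (A : H → Set H)
    (hAmono : ∀ x y u v : H, u ∈ A x → v ∈ A y → ⟪u - v, x - y⟫ ≥ 0)
    (hAmax : ∀ x u : H, (∀ y v : H, v ∈ A y → ⟪u - v, x - y⟫ ≥ 0) → u ∈ A x)
    (M : H → H) (hcont : Continuous M)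
    (hMmono : ∀ x y : H, ⟪M x - M y, x - y⟫ ≥ 0)
    (m : ℝ) (hm : 0 < m)
    (hstrong : ∀ x y : H, ⟪M x - M y, x - y⟫ ≥ m * ‖x - y‖ ^ 2) :
    ∀ v : H, ∃! x : H, v - M x ∈ A x := by
  intro v
  have hmne : m ≠ 0 := ne_of_gt hm
  -- uniqueness
  have huniq : ∀ x x' : H, v - M x ∈ A x → v - M x' ∈ A x' → x = x' := by
    intro x x' hx hx'
    have h1 := hAmono x x' (v - M x) (v - M x') hx hx'
    have h2 := hstrong x x'
    have e : (v - M x) - (v - M x') = -(M x - M x') := by abel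
    rw [e, inner_neg_left] at h1
    have h3 : ‖x - x'‖ ^ 2 ≤ 0 := by nlinarith
    have h4 : ‖x - x'‖ = 0 :=
      pow_eq_zero_iff (by norm_num : (2 : ℕ) ≠ 0) |>.mp (le_antisymm h3 (sq_nonneg _))
    exact sub_eq_zero.mp (norm_eq_zero.mp h4)
  set N : H → H := fun y => m⁻¹ • M y - y with hNdef
  have hNcont : Continuous N := ((continuous_const_smul m⁻¹).comp hcont).sub continuous_id
  set C : H → Set H := fun y => {c : H | m • (c - N y) ∈ A y} with hCdef
  have hNm : ∀ x y : H, ⟪N x - N y, x - y⟫ ≥ 0 := by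
    intro x y
    have e2 : N x - N y = m⁻¹ • (M x - M y) - (x - y) := by
      rw [hNdef]
      dsimp only
      rw [smul_sub]
      abel
    rw [e2, inner_sub_left, real_inner_smul_left, real_inner_self_eq_norm_sq]
    have h2 := hstrong x y
    have h3 : m⁻¹ * (m * ‖x - y‖ ^ 2) ≤ m⁻¹ * ⟪M x - M y, x - y⟫ :=
      mul_le_mul_of_nonneg_left h2 (by positivity)
    rw [← mul_assoc, inv_mul_cancel₀ hmne, one_mul] at h3
    linarith
  have hCmono : ∀ x y c d : H, c ∈ C x → d ∈ C y → ⟪c - d, x - y⟫ ≥ 0 := by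
    intro x y c d hc hd
    have hA := hAmono x y (m • (c - N x)) (m • (d - N y)) hc hd
    have e : c - d = (N x - N y) + m⁻¹ • (m • (c - N x) - m • (d - N y)) := by
      rw [smul_sub, smul_smul, smul_smul, inv_mul_cancel₀ hmne, one_smul, one_smul]
      abel
    rw [e, inner_add_left, real_inner_smul_left]
    have h5 : 0 ≤ m⁻¹ * ⟪m • (c - N x) - m • (d - N y), x - y⟫ :=
      mul_nonneg (by positivity) hA
    linarith [hNm x y]
  set A₂ : H → Set H := fun y => {w : H | m • w ∈ A y} with hA2def
  have hA2mono : ∀ x y u w : H, u ∈ A₂ x → w ∈ A₂ y → ⟪u - w, x - y⟫ ≥ 0 := by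
    intro x y u w hu hw
    have h1 := hAmono x y (m • u) (m • w) hu hw
    have e : u - w = m⁻¹ • (m • u - m • w) := by
      rw [smul_sub, smul_smul, smul_smul, inv_mul_cancel₀ hmne, one_smul, one_smul]
    rw [e, real_inner_smul_left]
    exact mul_nonneg (by positivity) h1
  have hA2max : ∀ x u : H, (∀ y w : H, w ∈ A₂ y → ⟪u - w, x - y⟫ ≥ 0) → u ∈ A₂ x := by
    intro x u hu
    show m • u ∈ A x
    apply hAmax
    intro y w hw
    have h2 := hu y (m⁻¹ • w)
      (by show m • m⁻¹ • w ∈ A y; rwa [smul_smul, mul_inv_cancel₀ hmne, one_smul])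
    have e : m • u - w = m • (u - m⁻¹ • w) := by
      rw [smul_sub, smul_smul, mul_inv_cancel₀ hmne, one_smul]
    rw [e, real_inner_smul_left]
    exact mul_nonneg (le_of_lt hm) h2
  have hCmax : ∀ x c : H, (∀ y d : H, d ∈ C y → ⟪c - d, x - y⟫ ≥ 0) → c ∈ C x := by
    intro x c hc
    have h' : ∀ y w : H, w ∈ A₂ y → ⟪c - (N y + w), x - y⟫ ≥ 0 := by
      intro y w hw
      apply hc y (N y + w)
      show m • ((N y + w) - N y) ∈ A y
      rw [add_sub_cancel_left]
      exact hw
    exact sum_max A₂ hA2mono hA2max N hNcont x c h'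
  obtain ⟨x, c, hcC, hsum⟩ := minty C hCmono hCmax (m⁻¹ • v)
  have hwA : m • (c - N x) ∈ A x := hcC
  have hkey : v - M x = m • (c - N x) := by
    have hv : v = m • (x + c) := by
      rw [hsum, smul_smul, mul_inv_cancel₀ hmne, one_smul]
    rw [hv, hNdef]
    dsimp only
    have er : c - (m⁻¹ • M x - x) = (c + x) - m⁻¹ • M x := by abel
    rw [er, smul_sub, smul_add, smul_smul, mul_inv_cancel₀ hmne, one_smul]
    simp only [smul_add]
    abel
  refine ⟨x, ?_, ?_⟩
  · show v - M x ∈ A x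
    rw [hkey]
    exact hwA
  · intro y hy
    exact huniq y x hy (by rw [hkey]; exact hwA)
end

section
/- Let S be the block operator on K × G given by S(y,z) = (y − τV*z, −τVy + τσ⁻¹z), where V : K → G is bounded linear and τ, σ > 0 with τσ‖V‖² < 1. Then S is self-adjoint and strongly positive, and for all y ∈ K, z ∈ G one has ‖y‖² ≤ (1 − τσ‖V‖²)⁻¹ ‖(y,z)‖²_S. -/
open RealInnerProductSpace

theorem stmt12 {K G : Type*}
    [NormedAddCommGroup K] [InnerProductSpace ℝ K] [CompleteSpace K]
    [NormedAddCommGroup G] [InnerProductSpace ℝ G] [CompleteSpace G]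
    (V : K →L[ℝ] G) (τ σ : ℝ) (hτ : 0 < τ) (hσ : 0 < σ)
    (hts : τ * σ * ‖V‖ ^ 2 < 1)
    (f : K × G → K × G)
    (hf : ∀ p : K × G,
      f p = (p.1 - τ • (ContinuousLinearMap.adjoint V) p.2, (τ / σ) • p.2 - τ • V p.1))
    (ip : K × G → K × G → ℝ)
    (hip : ∀ p q : K × G, ip p q = ⟪p.1, q.1⟫ + ⟪p.2, q.2⟫) :
    (∀ p q : K × G, ip (f p) q = ip p (f q)) ∧
    (∃ c > (0 : ℝ), ∀ p : K × G, ip (f p) p ≥ c * (‖p.1‖ ^ 2 + ‖p.2‖ ^ 2)) ∧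
    (∀ (y : K) (z : G), ‖y‖ ^ 2 ≤ (1 - τ * σ * ‖V‖ ^ 2)⁻¹ * ip (f (y, z)) (y, z)) := by
  set A := ‖V‖ with hA
  have hA0 : 0 ≤ A := norm_nonneg V
  -- key formula for the quadratic form
  have hq : ∀ p : K × G, ip (f p) p
      = ‖p.1‖ ^ 2 + (τ/σ) * ‖p.2‖ ^ 2 - 2 * τ * ⟪V p.1, p.2⟫ := by
    intro p
    rw [hip, hf]
    simp only [inner_sub_left, real_inner_smul_left,
      ContinuousLinearMap.adjoint_inner_left, real_inner_self_eq_norm_sq]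
    rw [real_inner_comm p.2 (V p.1)]
    ring
  have hbound : ∀ (y : K) (z : G), ⟪V y, z⟫ ≤ A * ‖y‖ * ‖z‖ := by
    intro y z
    calc ⟪V y, z⟫ ≤ ‖V y‖ * ‖z‖ := real_inner_le_norm _ _
    _ ≤ (A * ‖y‖) * ‖z‖ := by
        apply mul_le_mul_of_nonneg_right (V.le_opNorm y) (norm_nonneg z)
    _ = A * ‖y‖ * ‖z‖ := by ring
  refine ⟨?_, ?_, ?_⟩
  · intro p q
    rw [hip, hip, hf, hf]
    simp only [inner_sub_left, inner_sub_right, real_inner_smul_left, real_inner_smul_right,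
      ContinuousLinearMap.adjoint_inner_left, ContinuousLinearMap.adjoint_inner_right]
    ring
  · -- strong positivity
    have hmlt : τ^2 * A^2 < τ/σ := by
      rw [div_eq_mul_inv]
      have := mul_lt_mul_of_pos_left hts (mul_pos hτ (inv_pos.2 hσ))
      calc τ^2 * A^2 = τ * σ⁻¹ * (τ * σ * A ^ 2) := by field_simp
      _ < τ * σ⁻¹ * 1 := this
      _ = τ * σ⁻¹ := by ring
    set m := (τ^2 * A^2 + τ/σ) / 2 with hm
    have hm0 : 0 < m := by
      have : 0 < τ/σ := div_pos hτ hσ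
      positivity
    have hm1 : τ^2 * A^2 < m := by rw [hm]; linarith
    have hm2 : m < τ/σ := by rw [hm]; linarith
    set c := min ((m - τ^2*A^2)/m) (τ/σ - m) with hc
    have hc0 : 0 < c := lt_min (div_pos (by linarith) hm0) (by linarith)
    refine ⟨c, hc0, ?_⟩
    intro p
    rw [hq]
    have h1 : m * c ≤ m - τ^2*A^2 := by
      have := min_le_left ((m - τ^2*A^2)/m) (τ/σ - m)
      rw [← hc] at this
      calc m * c ≤ m * ((m - τ^2*A^2)/m) := by
            exact mul_le_mul_of_nonneg_left this hm0.le
      _ = m - τ^2*A^2 := by field_simp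
    have h2 : c ≤ τ/σ - m := min_le_right _ _
    have hi := hbound p.1 p.2
    have ha := norm_nonneg p.1
    have hb := norm_nonneg p.2
    have h2' : m * c ≤ m * (τ/σ) - m^2 := by nlinarith [mul_le_mul_of_nonneg_left h2 hm0.le]
    have key : m * (c * (‖p.1‖^2 + ‖p.2‖^2)) ≤
        m * (‖p.1‖ ^ 2 + τ / σ * ‖p.2‖ ^ 2 - 2 * τ * ⟪V p.1, p.2⟫) := by
      nlinarith [mul_le_mul_of_nonneg_right h1 (sq_nonneg ‖p.1‖),
        mul_le_mul_of_nonneg_right h2' (sq_nonneg ‖p.2‖),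
        sq_nonneg (τ*A*‖p.1‖ - m*‖p.2‖),
        mul_nonneg (by positivity : (0:ℝ) ≤ 2*τ*m) (sub_nonneg.2 hi)]
    exact (mul_le_mul_iff_right₀ hm0).mp key
  · intro y z
    have hq' := hq (y, z)
    have hi := hbound y z
    have hpos : 0 < 1 - τ * σ * A ^ 2 := by linarith
    have h3 : (1 - τ * σ * A ^ 2) * ‖y‖ ^ 2 ≤ ip (f (y, z)) (y, z) := by
      rw [hq']; dsimp only
      have key : σ * ((1 - τ * σ * A ^ 2) * ‖y‖ ^ 2) ≤
          σ * (‖y‖ ^ 2 + τ / σ * ‖z‖ ^ 2 - 2 * τ * ⟪V y, z⟫) := by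
        have e : σ * (‖y‖ ^ 2 + τ / σ * ‖z‖ ^ 2 - 2 * τ * ⟪V y, z⟫)
            = σ * ‖y‖ ^ 2 + τ * ‖z‖ ^ 2 - 2 * τ * σ * ⟪V y, z⟫ := by
          field_simp
        rw [e]
        nlinarith [mul_nonneg hτ.le (sq_nonneg (σ*A*‖y‖ - ‖z‖)),
          mul_nonneg (by positivity : (0:ℝ) ≤ 2*τ*σ) (sub_nonneg.2 hi)]
      exact (mul_le_mul_iff_right₀ hσ).mp key
    calc ‖y‖ ^ 2 = (1 - τ * σ * A ^ 2)⁻¹ * ((1 - τ * σ * A ^ 2) * ‖y‖ ^ 2) := by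
          field_simp
    _ ≤ (1 - τ * σ * A ^ 2)⁻¹ * ip (f (y, z)) (y, z) :=
          mul_le_mul_of_nonneg_left h3 (inv_pos.2 hpos).le
end

section
/- With S as above (S(y,z) = (y − τV*z, −τVy + τσ⁻¹z), τσ‖V‖² < 1), the inverse of S is given by S⁻¹ = diag((I − τσV*V)⁻¹, (I − τσVV*)⁻¹) ∘ [[I, σV*], [σV, τ⁻¹σI]], and moreover ‖(y,0)‖²_{S⁻¹} ≤ (1 − τσ‖V‖²)⁻¹‖y‖² and ‖(0,z)‖²_{S⁻¹} ≤ τ⁻¹σ(1 − τσ‖V‖²)⁻¹‖z‖² for all y ∈ K, z ∈ G. -/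
open RealInnerProductSpace

private lemma aux_bound {H : Type*} [NormedAddCommGroup H] [InnerProductSpace ℝ H]
    (c : ℝ) (hc : c < 1) (x y : H) (h : (1 - c) * ‖x‖ ^ 2 ≤ ⟪x, y⟫) :
    ⟪x, y⟫ ≤ (1 - c)⁻¹ * ‖y‖ ^ 2 := by
  have he : 0 < 1 - c := by linarith
  have h2 : ⟪x, y⟫ ≤ ‖x‖ * ‖y‖ := real_inner_le_norm x y
  rcases le_or_gt ⟪x, y⟫ 0 with ht | ht
  · exact le_trans ht (by positivity)
  · rw [inv_mul_eq_div, le_div_iff₀ he]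
    nlinarith [norm_nonneg x, norm_nonneg y,
      mul_le_mul h2 h2 ht.le (by positivity : (0:ℝ) ≤ ‖x‖ * ‖y‖),
      mul_le_mul_of_nonneg_right h (by positivity : (0:ℝ) ≤ ‖y‖ ^ 2)]

set_option maxHeartbeats 1000000 in
theorem stmt13 {K G : Type*}
    [NormedAddCommGroup K] [InnerProductSpace ℝ K] [CompleteSpace K]
    [NormedAddCommGroup G] [InnerProductSpace ℝ G] [CompleteSpace G]
    (V : K →L[ℝ] G) (τ σ : ℝ) (hτ : 0 < τ) (hσ : 0 < σ)
    (hts : τ * σ * ‖V‖ ^ 2 < 1)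
    (P : K →L[ℝ] K) (Q : G →L[ℝ] G)
    (hP : ∀ y : K, P (y - (τ * σ) • (ContinuousLinearMap.adjoint V) (V y)) = y ∧
      P y - (τ * σ) • (ContinuousLinearMap.adjoint V) (V (P y)) = y)
    (hQ : ∀ z : G, Q (z - (τ * σ) • V ((ContinuousLinearMap.adjoint V) z)) = z ∧
      Q z - (τ * σ) • V ((ContinuousLinearMap.adjoint V) (Q z)) = z)
    (f g : K × G → K × G)
    (hf : ∀ p : K × G,
      f p = (p.1 - τ • (ContinuousLinearMap.adjoint V) p.2, (τ / σ) • p.2 - τ • V p.1))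
    (hg : ∀ p : K × G,
      g p = (P (p.1 + σ • (ContinuousLinearMap.adjoint V) p.2),
             Q (σ • V p.1 + (σ / τ) • p.2)))
    (ip : K × G → K × G → ℝ)
    (hip : ∀ p q : K × G, ip p q = ⟪p.1, q.1⟫ + ⟪p.2, q.2⟫) :
    (∀ p : K × G, f (g p) = p ∧ g (f p) = p) ∧
    (∀ y : K, ip (g (y, 0)) (y, 0) ≤ (1 - τ * σ * ‖V‖ ^ 2)⁻¹ * ‖y‖ ^ 2) ∧
    (∀ z : G, ip (g (0, z)) (0, z) ≤ τ⁻¹ * σ * (1 - τ * σ * ‖V‖ ^ 2)⁻¹ * ‖z‖ ^ 2) := by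
  set A := ContinuousLinearMap.adjoint V with hA
  have hτ0 : τ ≠ 0 := hτ.ne'
  have hσ0 : σ ≠ 0 := hσ.ne'
  have hP0 : P 0 = 0 := by simpa using (hP 0).1
  have hQ0 : Q 0 = 0 := by simpa using (hQ 0).1
  constructor
  · intro p
    obtain ⟨y, z⟩ := p
    constructor
    · -- f (g (y,z)) = (y,z)
      rw [hg, hf]
      set u := y + σ • A z with hu
      set v := σ • V y + (σ / τ) • z with hv
      have h1 : P u - (τ * σ) • A (V (P u)) = u := (hP u).2
      have h2 : Q v - (τ * σ) • V (A (Q v)) = v := (hQ v).2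
      have h2' : A (Q v) - (τ * σ) • A (V (A (Q v))) = A v := by
        rw [← map_smul, ← map_sub, h2]
      -- first component
      have key1 : (P u - τ • A (Q v) - y) -
          (τ * σ) • A (V (P u - τ • A (Q v) - y)) = 0 := by
        simp only [map_sub, map_smul]
        have hAv : A v = σ • A (V y) + (σ / τ) • A z := by
          rw [hv]; simp [map_add, map_smul]
        have h1' : P u - (τ * σ) • A (V (P u)) = y + σ • A z := by rw [h1, hu]
        have h2'' : A (Q v) - (τ * σ) • A (V (A (Q v))) =
            σ • A (V y) + (σ / τ) • A z := by rw [h2', hAv]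
        linear_combination (norm := match_scalars <;> field_simp <;> ring) h1' - τ • h2''
      have e1 : P u - τ • A (Q v) - y = 0 := by
        have := (hP (P u - τ • A (Q v) - y)).1
        rw [key1, hP0] at this; exact this.symm
      -- second component
      have key2 : ((τ / σ) • Q v - τ • V (P u) - z) -
          (τ * σ) • V (A ((τ / σ) • Q v - τ • V (P u) - z)) = 0 := by
        simp only [map_sub, map_smul]
        have hVu : V u = V y + σ • V (A z) := by
          rw [hu]; simp [map_add, map_smul]
        have h2''' : Q v - (τ * σ) • V (A (Q v)) = σ • V y + (σ / τ) • z := by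
          rw [h2, hv]
        have h1'' : V (P u) - (τ * σ) • V (A (V (P u))) = V y + σ • V (A z) := by
          rw [← map_smul, ← map_sub, h1, hVu]
        linear_combination (norm := match_scalars <;> field_simp <;> ring) (τ / σ) • h2''' - τ • h1''
      have e2 : (τ / σ) • Q v - τ • V (P u) - z = 0 := by
        have := (hQ ((τ / σ) • Q v - τ • V (P u) - z)).1
        rw [key2, hQ0] at this; exact this.symm
      exact Prod.ext (by simpa [sub_eq_zero] using e1) (by simpa [sub_eq_zero] using e2)
    · -- g (f (y,z)) = (y,z)
      rw [hf, hg]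
      have c1 : (y - τ • A z) + σ • A ((τ / σ) • z - τ • V y) =
          y - (τ * σ) • A (V y) := by
        simp only [map_sub, map_smul]
        match_scalars <;> field_simp <;> ring
      have c2 : σ • V (y - τ • A z) + (σ / τ) • ((τ / σ) • z - τ • V y) =
          z - (τ * σ) • V (A z) := by
        simp only [map_sub, map_smul]
        match_scalars <;> field_simp <;> ring
      rw [c1, c2, (hP y).1, (hQ z).1]
  constructor
  · intro y
    rw [hg, hip]
    simp only [map_zero, smul_zero, add_zero, inner_zero_left, inner_zero_right]
    have hx : (1 - τ * σ * ‖V‖ ^ 2) * ‖P y‖ ^ 2 ≤ ⟪P y, y⟫ := by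
      have key : ∀ x : K, ⟪x, x - (τ * σ) • A (V x)⟫ = ‖x‖ ^ 2 - τ * σ * ‖V x‖ ^ 2 := by
        intro x
        rw [inner_sub_right, real_inner_smul_right, real_inner_self_eq_norm_sq, hA,
          ContinuousLinearMap.adjoint_inner_right, real_inner_self_eq_norm_sq]
      have h1 : ⟪P y, y⟫ = ‖P y‖ ^ 2 - τ * σ * ‖V (P y)‖ ^ 2 := by
        rw [← key (P y), (hP y).2]
      rw [h1]
      have h2 : ‖V (P y)‖ ^ 2 ≤ ‖V‖ ^ 2 * ‖P y‖ ^ 2 := by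
        have := V.le_opNorm (P y)
        nlinarith [norm_nonneg (V (P y)), norm_nonneg (P y), norm_nonneg V]
      nlinarith [mul_pos hτ hσ]
    simpa using aux_bound (τ * σ * ‖V‖ ^ 2) hts (P y) y hx
  · intro z
    rw [hg, hip]
    simp only [map_zero, smul_zero, zero_add, inner_zero_right, map_smul,
      real_inner_smul_left]
    have hx : (1 - τ * σ * ‖V‖ ^ 2) * ‖Q z‖ ^ 2 ≤ ⟪Q z, z⟫ := by
      have key : ∀ x : G, ⟪x, x - (τ * σ) • V (A x)⟫ = ‖x‖ ^ 2 - τ * σ * ‖A x‖ ^ 2 := by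
        intro x
        rw [inner_sub_right, real_inner_smul_right, real_inner_self_eq_norm_sq, hA,
          ← ContinuousLinearMap.adjoint_inner_left, real_inner_self_eq_norm_sq]
      have h1 : ⟪Q z, z⟫ = ‖Q z‖ ^ 2 - τ * σ * ‖A (Q z)‖ ^ 2 := by
        rw [← key (Q z), (hQ z).2]
      rw [h1]
      have hnA : ‖A‖ = ‖V‖ := ContinuousLinearMap.adjoint.norm_map V
      have h2 : ‖A (Q z)‖ ^ 2 ≤ ‖V‖ ^ 2 * ‖Q z‖ ^ 2 := by
        have := A.le_opNorm (Q z)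
        rw [hnA] at this
        nlinarith [norm_nonneg (A (Q z)), norm_nonneg (Q z), norm_nonneg V]
      nlinarith [mul_pos hτ hσ]
    have hb := aux_bound (τ * σ * ‖V‖ ^ 2) hts (Q z) z hx
    have hst : 0 ≤ σ / τ := by positivity
    calc (σ / τ) * ⟪Q z, z⟫ ≤ (σ / τ) * ((1 - τ * σ * ‖V‖ ^ 2)⁻¹ * ‖z‖ ^ 2) :=
          mul_le_mul_of_nonneg_left hb hst
      _ = τ⁻¹ * σ * (1 - τ * σ * ‖V‖ ^ 2)⁻¹ * ‖z‖ ^ 2 := by ring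
end

section
/- Let B : K → 2^K and D : G → 2^G be maximally monotone, E : K → K monotone and Lipschitz, V : K → G bounded linear. Then the operator A on K × G defined by A(y,z) = (By + Ey + V*z) × (D⁻¹z − Vy) is maximally monotone. -/
open RealInnerProductSpace

section Abstract
variable {H : Type*} [NormedAddCommGroup H] [InnerProductSpace ℝ H]

/-- Maximal monotonicity of a set-valued operator. -/
def IsMaxMono (T : H → Set H) : Prop :=
  (∀ x y u v, u ∈ T x → v ∈ T y → ⟪u - v, x - y⟫ ≥ 0) ∧
  (∀ x u, (∀ y v, v ∈ T y → ⟪u - v, x - y⟫ ≥ 0) → u ∈ T x)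

lemma mm_graph_ne {T : H → Set H} (hT : IsMaxMono T) : ∃ a b, b ∈ T a := by
  by_contra h
  push_neg at h
  exact h 0 0 (hT.2 0 0 (fun y v hv => absurd hv (h y v)))

lemma mm_ge_inner {T : H → Set H} (hT : IsMaxMono T) (x u : H) :
    ∃ a b, b ∈ T a ∧ ⟪x, u⟫ ≤ ⟪x, b⟫ + ⟪a, u⟫ - ⟪a, b⟫ := by
  by_cases hrel : ∀ y v, v ∈ T y → ⟪u - v, x - y⟫ ≥ 0
  · exact ⟨x, u, hT.2 x u hrel, by simp⟩
  · push_neg at hrel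
    obtain ⟨a, b, hb, hlt⟩ := hrel
    refine ⟨a, b, hb, ?_⟩
    simp only [inner_sub_left, inner_sub_right] at hlt
    have h1 := real_inner_comm u x
    have h2 := real_inner_comm u a
    have h3 := real_inner_comm b x
    have h4 := real_inner_comm b a
    linarith

lemma aux_small_t {c Kc : ℝ} (hK : 0 ≤ Kc) (h : ∀ t : ℝ, 0 < t → t ≤ 1 → 0 ≤ c + t * Kc) :
    0 ≤ c := by
  by_contra hc
  push_neg at hc
  have hden : (0:ℝ) < 2 * Kc + 1 := by linarith
  set t : ℝ := min 1 ((-c) / (2 * Kc + 1)) with ht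
  have htpos : 0 < t := lt_min one_pos (div_pos (by linarith) hden)
  have ht1 : t ≤ 1 := min_le_left _ _
  have ht2 : t ≤ (-c) / (2 * Kc + 1) := min_le_right _ _
  have := h t htpos ht1
  have hmul : t * Kc ≤ (-c) / (2 * Kc + 1) * Kc := mul_le_mul_of_nonneg_right ht2 hK
  have hkey : (-c) / (2 * Kc + 1) * Kc ≤ (-c) / 2 := by
    rw [div_mul_eq_mul_div, div_le_div_iff₀ hden (by norm_num)]
    nlinarith
  linarith

lemma minty_zero [CompleteSpace H] {T : H → Set H} (hT : IsMaxMono T) :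
    ∃ x, -x ∈ T x := by
  classical
  obtain ⟨a₀, b₀, hab₀⟩ := mm_graph_ne hT
  set Sset : Set ℝ := {r | ∃ x u : H, ∀ a b, b ∈ T a →
      ⟪x, b⟫ + ⟪a, u⟫ - ⟪a, b⟫ + ‖x‖ ^ 2 / 2 + ‖u‖ ^ 2 / 2 ≤ r} with hSset
  have hSne : (⟪a₀, b₀⟫ + ‖a₀‖ ^ 2 / 2 + ‖b₀‖ ^ 2 / 2) ∈ Sset := by
    refine ⟨a₀, b₀, fun a b hb => ?_⟩
    have hmono := hT.1 a₀ a b₀ b hab₀ hb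
    simp only [inner_sub_left, inner_sub_right] at hmono
    have h1 := real_inner_comm b₀ a₀
    have h2 := real_inner_comm b₀ a
    have h3 := real_inner_comm b a₀
    have h4 := real_inner_comm b a
    linarith
  have hSbd : ∀ r ∈ Sset, (0:ℝ) ≤ r := by
    rintro r ⟨x, u, hxu⟩
    obtain ⟨a, b, hb, hge⟩ := mm_ge_inner hT x u
    have h1 := hxu a b hb
    have h2 := norm_add_sq_real x u
    nlinarith [sq_nonneg ‖x + u‖]
  set m : ℝ := sInf Sset with hm
  have hbdd : BddBelow Sset := ⟨0, fun r hr => hSbd r hr⟩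
  have hm_le : ∀ r ∈ Sset, m ≤ r := fun r hr => csInf_le hbdd hr
  have hseq : ∀ n : ℕ, ∃ p : H × H, ∀ a b, b ∈ T a →
      ⟪p.1, b⟫ + ⟪a, p.2⟫ - ⟪a, b⟫ + ‖p.1‖ ^ 2 / 2 + ‖p.2‖ ^ 2 / 2 ≤ m + 1 / (n + 1) := by
    intro n
    have hlt : m < m + 1 / (n + 1 : ℝ) := by
      have : (0:ℝ) < 1 / (n + 1 : ℝ) := by positivity
      linarith
    obtain ⟨r, hrS, hr⟩ := exists_lt_of_csInf_lt ⟨_, hSne⟩ hlt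
    obtain ⟨x, u, hxu⟩ := hrS
    exact ⟨(x, u), fun a b hb => (hxu a b hb).trans hr.le⟩
  choose p hp using hseq
  have key : ∀ n k : ℕ, ‖(p n).1 - (p k).1‖ ^ 2 + ‖(p n).2 - (p k).2‖ ^ 2 ≤
      4 * (1 / (n + 1) + 1 / (k + 1)) := by
    intro n k
    set x := (p n).1; set u := (p n).2; set y := (p k).1; set v := (p k).2
    have hmem : (1/2 * (m + 1/(n+1)) + 1/2 * (m + 1/(k+1))
        - 1/8 * (‖x - y‖ ^ 2 + ‖u - v‖ ^ 2)) ∈ Sset := by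
      refine ⟨(1/2 : ℝ) • (x + y), (1/2 : ℝ) • (u + v), fun a b hb => ?_⟩
      have h1 := hp n a b hb
      have h2 := hp k a b hb
      have e1 : ⟪(1/2 : ℝ) • (x + y), b⟫ = 1/2 * (⟪x, b⟫ + ⟪y, b⟫) := by
        rw [real_inner_smul_left, inner_add_left]
      have e2 : ⟪a, (1/2 : ℝ) • (u + v)⟫ = 1/2 * (⟪a, u⟫ + ⟪a, v⟫) := by
        rw [real_inner_smul_right, inner_add_right]
      have e3 : ‖(1/2 : ℝ) • (x + y)‖ ^ 2 = 1/4 * ‖x + y‖ ^ 2 := by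
        rw [norm_smul]; norm_num; ring
      have e4 : ‖(1/2 : ℝ) • (u + v)‖ ^ 2 = 1/4 * ‖u + v‖ ^ 2 := by
        rw [norm_smul]; norm_num; ring
      have e5 := norm_add_sq_real x y
      have e6 := norm_sub_sq_real x y
      have e7 := norm_add_sq_real u v
      have e8 := norm_sub_sq_real u v
      rw [e1, e2, e3, e4]
      linarith
    have hle := hm_le _ hmem
    linarith
  have hb0 : Filter.Tendsto (fun N : ℕ => Real.sqrt (8 * (1 / (N + 1)))) Filter.atTop
      (nhds 0) := by
    have h1 : Filter.Tendsto (fun N : ℕ => 8 * (1 / (N + 1 : ℝ))) Filter.atTop (nhds (8 * 0)) :=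
      tendsto_one_div_add_atTop_nhds_zero_nat.const_mul (8:ℝ)
    rw [mul_zero] at h1
    have h2 : Filter.Tendsto (fun N : ℕ => Real.sqrt (8 * (1 / (N + 1))))
        Filter.atTop (nhds (Real.sqrt 0)) := (Real.continuous_sqrt.tendsto 0).comp h1
    rwa [Real.sqrt_zero] at h2
  have hcauchy : ∀ (f : ℕ → H), (∀ n k N : ℕ, N ≤ n → N ≤ k →
      ‖f n - f k‖ ^ 2 ≤ 8 * (1 / (N + 1))) → CauchySeq f := by
    intro f hf
    refine cauchySeq_of_le_tendsto_0 (fun N : ℕ => Real.sqrt (8 * (1 / (N + 1)))) ?_ hb0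
    intro n k N hn hk
    rw [dist_eq_norm]
    calc ‖f n - f k‖ = Real.sqrt (‖f n - f k‖ ^ 2) := by
          rw [Real.sqrt_sq (norm_nonneg _)]
      _ ≤ Real.sqrt (8 * (1 / (N + 1))) := Real.sqrt_le_sqrt (hf n k N hn hk)
  have hbound : ∀ n k N : ℕ, N ≤ n → N ≤ k →
      (‖(p n).1 - (p k).1‖ ^ 2 + ‖(p n).2 - (p k).2‖ ^ 2) ≤ 8 * (1 / (N + 1)) := by
    intro n k N hn hk
    have h1 := key n k
    have h2 : 1 / (n + 1 : ℝ) ≤ 1 / (N + 1) := by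
      apply one_div_le_one_div_of_le (by positivity)
      exact_mod_cast by omega
    have h3 : 1 / (k + 1 : ℝ) ≤ 1 / (N + 1) := by
      apply one_div_le_one_div_of_le (by positivity)
      exact_mod_cast by omega
    linarith
  have hcx : CauchySeq (fun n => (p n).1) := by
    apply hcauchy
    intro n k N hn hk
    have := hbound n k N hn hk
    nlinarith [sq_nonneg ‖(p n).2 - (p k).2‖]
  have hcu : CauchySeq (fun n => (p n).2) := by
    apply hcauchy
    intro n k N hn hk
    have := hbound n k N hn hk
    nlinarith [sq_nonneg ‖(p n).1 - (p k).1‖]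
  obtain ⟨x₀, hx₀⟩ := cauchySeq_tendsto_of_complete hcx
  obtain ⟨u₀, hu₀⟩ := cauchySeq_tendsto_of_complete hcu
  have hA1 : ∀ a b, b ∈ T a →
      ⟪x₀, b⟫ + ⟪a, u₀⟫ - ⟪a, b⟫ + ‖x₀‖ ^ 2 / 2 + ‖u₀‖ ^ 2 / 2 ≤ m := by
    intro a b hb
    have hLHS : Filter.Tendsto (fun n => ⟪(p n).1, b⟫ + ⟪a, (p n).2⟫ - ⟪a, b⟫
        + ‖(p n).1‖ ^ 2 / 2 + ‖(p n).2‖ ^ 2 / 2) Filter.atTop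
        (nhds (⟪x₀, b⟫ + ⟪a, u₀⟫ - ⟪a, b⟫ + ‖x₀‖ ^ 2 / 2 + ‖u₀‖ ^ 2 / 2)) := by
      have t1 : Filter.Tendsto (fun n => ⟪(p n).1, b⟫) Filter.atTop (nhds ⟪x₀, b⟫) :=
        hx₀.inner tendsto_const_nhds
      have t2 : Filter.Tendsto (fun n => ⟪a, (p n).2⟫) Filter.atTop (nhds ⟪a, u₀⟫) :=
        tendsto_const_nhds.inner hu₀
      have t3 : Filter.Tendsto (fun n => ‖(p n).1‖ ^ 2 / 2) Filter.atTop
          (nhds (‖x₀‖ ^ 2 / 2)) := ((hx₀.norm.pow 2).div_const 2)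
      have t4 : Filter.Tendsto (fun n => ‖(p n).2‖ ^ 2 / 2) Filter.atTop
          (nhds (‖u₀‖ ^ 2 / 2)) := ((hu₀.norm.pow 2).div_const 2)
      exact (((t1.add t2).sub tendsto_const_nhds).add t3).add t4
    have hRHS : Filter.Tendsto (fun n : ℕ => m + 1 / (n + 1 : ℝ)) Filter.atTop (nhds (m + 0)) :=
      tendsto_const_nhds.add tendsto_one_div_add_atTop_nhds_zero_nat
    rw [add_zero] at hRHS
    exact le_of_tendsto_of_tendsto' hLHS hRHS (fun n => hp n a b hb)
  have hstar : ∀ a b, b ∈ T a →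
      m - (‖x₀‖ ^ 2 / 2 + ‖u₀‖ ^ 2 / 2) ≤ ⟪a, b⟫ + ⟪x₀, a⟫ + ⟪u₀, b⟫ - ‖x₀‖ ^ 2 - ‖u₀‖ ^ 2 := by
    intro a b hb
    have h0 : 0 ≤ (⟪a, b⟫ + ⟪x₀, a⟫ + ⟪u₀, b⟫ - ‖x₀‖ ^ 2 - ‖u₀‖ ^ 2
        - (m - (‖x₀‖ ^ 2 / 2 + ‖u₀‖ ^ 2 / 2))) := by
      refine aux_small_t (Kc := (‖a - x₀‖ ^ 2 + ‖b - u₀‖ ^ 2) / 2) (by positivity) ?_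
      intro t ht0 ht1
      have hmem : ((1 - t) * (m - (‖x₀‖ ^ 2 / 2 + ‖u₀‖ ^ 2 / 2)) + t * ⟪a, b⟫
          + ‖x₀ + t • (a - x₀)‖ ^ 2 / 2 + ‖u₀ + t • (b - u₀)‖ ^ 2 / 2) ∈ Sset := by
        refine ⟨x₀ + t • (a - x₀), u₀ + t • (b - u₀), fun a' b' hb' => ?_⟩
        have hl0 := hA1 a' b' hb'
        have hlab : ⟪a, b'⟫ + ⟪a', b⟫ - ⟪a', b'⟫ ≤ ⟪a, b⟫ := by
          have hmono := hT.1 a a' b b' hb hb'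
          simp only [inner_sub_left, inner_sub_right] at hmono
          have h1 := real_inner_comm b a
          have h2 := real_inner_comm b a'
          have h3 := real_inner_comm b' a
          have h4 := real_inner_comm b' a'
          linarith
        have e1 : ⟪x₀ + t • (a - x₀), b'⟫ = ⟪x₀, b'⟫ + t * (⟪a, b'⟫ - ⟪x₀, b'⟫) := by
          rw [inner_add_left, real_inner_smul_left, inner_sub_left]
        have e2 : ⟪a', u₀ + t • (b - u₀)⟫ = ⟪a', u₀⟫ + t * (⟪a', b⟫ - ⟪a', u₀⟫) := by
          rw [inner_add_right, real_inner_smul_right, inner_sub_right]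
        rw [e1, e2]
        have hx1 : ⟪x₀, b'⟫ + ⟪a', u₀⟫ - ⟪a', b'⟫ ≤ m - (‖x₀‖ ^ 2 / 2 + ‖u₀‖ ^ 2 / 2) := by
          linarith
        nlinarith [mul_le_mul_of_nonneg_left hx1 (by linarith : (0:ℝ) ≤ 1 - t),
          mul_le_mul_of_nonneg_left hlab ht0.le]
      have hle := hm_le _ hmem
      have e3 : ‖x₀ + t • (a - x₀)‖ ^ 2
          = ‖x₀‖ ^ 2 + 2 * t * (⟪x₀, a⟫ - ‖x₀‖ ^ 2) + t ^ 2 * ‖a - x₀‖ ^ 2 := by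
        rw [norm_add_sq_real, real_inner_smul_right, norm_smul, inner_sub_right,
          real_inner_self_eq_norm_sq, Real.norm_eq_abs, abs_of_pos ht0]
        ring
      have e4 : ‖u₀ + t • (b - u₀)‖ ^ 2
          = ‖u₀‖ ^ 2 + 2 * t * (⟪u₀, b⟫ - ‖u₀‖ ^ 2) + t ^ 2 * ‖b - u₀‖ ^ 2 := by
        rw [norm_add_sq_real, real_inner_smul_right, norm_smul, inner_sub_right,
          real_inner_self_eq_norm_sq, Real.norm_eq_abs, abs_of_pos ht0]
        ring
      rw [e3, e4] at hle
      have h5 : 0 ≤ t * ((⟪a, b⟫ + ⟪x₀, a⟫ + ⟪u₀, b⟫ - ‖x₀‖ ^ 2 - ‖u₀‖ ^ 2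
          - (m - (‖x₀‖ ^ 2 / 2 + ‖u₀‖ ^ 2 / 2)))
          + t * ((‖a - x₀‖ ^ 2 + ‖b - u₀‖ ^ 2) / 2)) := by nlinarith [hle]
      exact nonneg_of_mul_nonneg_right h5 ht0
    linarith
  -- conclusion
  obtain ⟨a₁, b₁, hb₁, hge₁⟩ := mm_ge_inner hT x₀ u₀
  have hr₀ : ⟪x₀, u₀⟫ ≤ m - (‖x₀‖ ^ 2 / 2 + ‖u₀‖ ^ 2 / 2) := by
    have := hA1 a₁ b₁ hb₁
    linarith
  have hmem : -x₀ ∈ T (-u₀) := by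
    apply hT.2
    intro a b hb
    have h1 := hstar a b hb
    have h2 := norm_add_sq_real x₀ u₀
    simp only [inner_sub_left, inner_sub_right, inner_neg_left, inner_neg_right, neg_neg]
    have h3 := real_inner_comm b u₀
    have h4 := real_inner_comm b a
    linarith [sq_nonneg ‖x₀ + u₀‖]
  have h2 := hstar (-u₀) (-x₀) hmem
  simp only [inner_neg_left, inner_neg_right, neg_neg] at h2
  have h3 := norm_add_sq_real x₀ u₀
  have h4 := real_inner_comm u₀ x₀
  have hz : ‖x₀ + u₀‖ ^ 2 ≤ 0 := by linarith
  have hz2 : x₀ + u₀ = 0 := by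
    have : ‖x₀ + u₀‖ = 0 := by nlinarith [norm_nonneg (x₀ + u₀)]
    exact norm_eq_zero.mp this
  have hxeq : -u₀ = x₀ := neg_eq_of_add_eq_zero_left hz2
  rw [hxeq] at hmem
  exact ⟨x₀, hmem⟩

lemma minty_surj [CompleteSpace H] {T : H → Set H} (hT : IsMaxMono T) (w : H) :
    ∃ x u, u ∈ T x ∧ x + u = w := by
  set T' : H → Set H := fun x => {u | u + w ∈ T x} with hT'def
  have hT' : IsMaxMono T' := by
    constructor
    · intro x y u v hu hv
      have := hT.1 x y (u + w) (v + w) hu hv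
      simpa using this
    · intro x u hrel
      refine hT.2 x (u + w) (fun y v hv => ?_)
      have h1 := hrel y (v - w) (by simpa [hT'def] using hv)
      have : u - (v - w) = u + w - v := by abel
      rwa [this] at h1
  obtain ⟨x, hx⟩ := minty_zero hT'
  exact ⟨x, -x + w, hx, by abel⟩

lemma mm_smul {T : H → Set H} (hT : IsMaxMono T) {l : ℝ} (hl : 0 < l) :
    IsMaxMono (fun x => (l • ·) '' T x) := by
  constructor
  · rintro x y u v ⟨u', hu', rfl⟩ ⟨v', hv', rfl⟩
    have := hT.1 x y u' v' hu' hv'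
    have e : l • u' - l • v' = l • (u' - v') := by rw [smul_sub]
    rw [e, real_inner_smul_left]
    exact mul_nonneg hl.le this
  · intro x u hrel
    refine ⟨l⁻¹ • u, hT.2 x (l⁻¹ • u) (fun y v hv => ?_), ?_⟩
    · have h1 := hrel y (l • v) ⟨v, hv, rfl⟩
      have e : l⁻¹ • (u - l • v) = l⁻¹ • u - v := by
        rw [smul_sub, smul_smul, inv_mul_cancel₀ hl.ne', one_smul]
      have h2 : ⟪l⁻¹ • (u - l • v), x - y⟫ = l⁻¹ * ⟪u - l • v, x - y⟫ :=
        real_inner_smul_left _ _ _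
      rw [e] at h2
      rw [h2]
      exact mul_nonneg (by positivity) h1
    · show l • l⁻¹ • u = u
      rw [smul_smul, mul_inv_cancel₀ hl.ne', one_smul]

lemma mm_sum [CompleteSpace H] {T : H → Set H} (hT : IsMaxMono T) (C : H → H)
    (hCmono : ∀ x y, ⟪C x - C y, x - y⟫ ≥ 0) (L : ℝ) (hL : 0 ≤ L)
    (hCLip : ∀ x y, ‖C x - C y‖ ≤ L * ‖x - y‖) :
    IsMaxMono (fun x => {u | u - C x ∈ T x}) := by
  constructor
  · intro x y u v hu hv
    have h1 := hT.1 x y (u - C x) (v - C y) hu hv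
    have h2 := hCmono x y
    have e : u - v = ((u - C x) - (v - C y)) + (C x - C y) := by abel
    rw [e, inner_add_left]
    linarith
  · intro x u hrel
    set l : ℝ := 1 / (2 * (L + 1)) with hldef
    have hl : 0 < l := by positivity
    have hTl : IsMaxMono (fun z => (l • ·) '' T z) := mm_smul hT hl
    choose J t ht hsum using (minty_surj hTl)
    have hJlip : ∀ w w', ‖J w - J w'‖ ≤ ‖w - w'‖ := by
      intro w w'
      have hmono := hTl.1 (J w) (J w') (t w) (t w') (ht w) (ht w')
      have e1 : t w = w - J w := eq_sub_of_add_eq' (hsum w)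
      have e2 : t w' = w' - J w' := eq_sub_of_add_eq' (hsum w')
      rw [e1, e2] at hmono
      have e3 : w - J w - (w' - J w') = (w - w') - (J w - J w') := by abel
      rw [e3, inner_sub_left] at hmono
      have h4 : ⟪J w - J w', J w - J w'⟫ ≤ ⟪w - w', J w - J w'⟫ := by linarith
      rw [real_inner_self_eq_norm_mul_norm] at h4
      have h5 : ⟪w - w', J w - J w'⟫ ≤ ‖w - w'‖ * ‖J w - J w'‖ := real_inner_le_norm _ _
      rcases eq_or_lt_of_le (norm_nonneg (J w - J w')) with h6 | h6
      · rw [← h6]; exact norm_nonneg _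
      · exact le_of_mul_le_mul_right (by linarith) h6
    -- the contraction
    set Φ : H → H := fun y => J (x + l • u - l • C y) with hΦdef
    have hΦlip : ∀ y y', ‖Φ y - Φ y'‖ ≤ 1/2 * ‖y - y'‖ := by
      intro y y'
      have h1 := hJlip (x + l • u - l • C y) (x + l • u - l • C y')
      have e : (x + l • u - l • C y) - (x + l • u - l • C y') = l • (C y' - C y) := by
        rw [smul_sub]; abel
      rw [e] at h1
      have h2 : ‖l • (C y' - C y)‖ = l * ‖C y' - C y‖ := by
        rw [norm_smul, Real.norm_eq_abs, abs_of_pos hl]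
      have h3 : ‖C y' - C y‖ ≤ L * ‖y' - y‖ := hCLip y' y
      have h4 : ‖y' - y‖ = ‖y - y'‖ := norm_sub_rev _ _
      have h5 : l * L ≤ 1/2 := by
        rw [hldef, div_mul_eq_mul_div, one_mul, div_le_iff₀ (by positivity)]
        linarith
      calc ‖Φ y - Φ y'‖ ≤ l * ‖C y' - C y‖ := by rw [← h2]; exact h1
        _ ≤ l * (L * ‖y - y'‖) := by
            apply mul_le_mul_of_nonneg_left _ hl.le
            rw [← h4]; exact h3
        _ = (l * L) * ‖y - y'‖ := by ring
        _ ≤ 1/2 * ‖y - y'‖ := mul_le_mul_of_nonneg_right h5 (norm_nonneg _)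
    have hcontr : ContractingWith (1/2 : NNReal) Φ := by
      constructor
      · rw [← NNReal.coe_lt_coe]; norm_num
      · apply LipschitzWith.of_dist_le_mul
        intro y y'
        rw [dist_eq_norm, dist_eq_norm]
        have := hΦlip y y'
        calc ‖Φ y - Φ y'‖ ≤ 1/2 * ‖y - y'‖ := this
          _ = ((1/2 : NNReal) : ℝ) * ‖y - y'‖ := by norm_num
    obtain ⟨y, hy, -⟩ := hcontr.exists_fixedPoint (0 : H) (edist_ne_top _ _)
    -- unpack the fixed point
    have hy' : J (x + l • u - l • C y) = y := hy
    obtain ⟨t', ht', hteq⟩ := ht (x + l • u - l • C y)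
    have hteq' : l • t' = t (x + l • u - l • C y) := hteq
    rw [hy'] at ht'
    have hsum' : y + l • t' = x + l • u - l • C y := by
      have h := hsum (x + l • u - l • C y)
      rw [hy', ← hteq'] at h
      exact h
    set v : H := t' + C y with hvdef
    have hv : v ∈ {u | u - C y ∈ T y} := by
      show v - C y ∈ T y
      rw [hvdef]; simpa using ht'
    have hlin : x - y = l • (v - u) := by
      rw [hvdef, smul_sub, smul_add]
      rw [eq_sub_iff_add_eq] at hsum'
      have h7 : x = y + l • t' + l • C y - l • u := eq_sub_of_add_eq hsum'.symm
      rw [h7]; abel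
    have hrel' := hrel y v hv
    rw [hlin] at hrel'
    have e8 : ⟪u - v, l • (v - u)⟫ = -(l * ‖u - v‖ ^ 2) := by
      rw [real_inner_smul_right]
      have : v - u = -(u - v) := by abel
      rw [this, inner_neg_right, real_inner_self_eq_norm_sq]
      ring
    rw [e8] at hrel'
    have h9 : ‖u - v‖ ^ 2 ≤ 0 := by
      have hls : l * ‖u - v‖ ^ 2 ≤ l * 0 := by rw [mul_zero]; linarith [hrel']
      exact le_of_mul_le_mul_left hls hl
    have huv : u = v := by
      have h10 : ‖u - v‖ ^ 2 = 0 := le_antisymm h9 (sq_nonneg _)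
      have h11 : ‖u - v‖ = 0 := (pow_eq_zero_iff (by norm_num : (2:ℕ) ≠ 0)).mp h10
      exact sub_eq_zero.mp (norm_eq_zero.mp h11)
    have hxy : x = y := by
      rw [huv] at hlin
      simp only [sub_self, smul_zero] at hlin
      exact sub_eq_zero.mp hlin
    show u - C x ∈ T x
    rw [hxy, huv]
    exact hv

lemma mm_inv {T : H → Set H} (hT : IsMaxMono T) : IsMaxMono (fun z => {g | z ∈ T g}) := by
  constructor
  · intro x y u v hu hv
    have := hT.1 u v x y hu hv
    rw [real_inner_comm]
    exact this
  · intro x u hrel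
    refine hT.2 u x (fun g d hd => ?_)
    have := hrel d g hd
    rw [real_inner_comm]
    exact this

end Abstract

section Prod
variable {K G : Type*}
  [NormedAddCommGroup K] [InnerProductSpace ℝ K] [CompleteSpace K]
  [NormedAddCommGroup G] [InnerProductSpace ℝ G] [CompleteSpace G]

lemma mm_prod {P : K → Set K} {Q : G → Set G} (hP : IsMaxMono P) (hQ : IsMaxMono Q) :
    IsMaxMono (fun p : WithLp 2 (K × G) =>
      {q : WithLp 2 (K × G) | q.fst ∈ P p.fst ∧ q.snd ∈ Q p.snd}) := by
  constructor
  · intro x y u v hu hv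
    simp only [WithLp.prod_inner_apply, WithLp.sub_fst, WithLp.sub_snd]
    have h1 := hP.1 x.fst y.fst u.fst v.fst hu.1 hv.1
    have h2 := hQ.1 x.snd y.snd u.snd v.snd hu.2 hv.2
    exact add_nonneg h1 h2
  · intro p u hrel
    obtain ⟨y1, v1, hv1, he1⟩ := minty_surj hP (p.fst + u.fst)
    obtain ⟨y2, v2, hv2, he2⟩ := minty_surj hQ (p.snd + u.snd)
    set q : WithLp 2 (K × G) := (WithLp.equiv 2 (K × G)).symm (y1, y2) with hqdef
    set v : WithLp 2 (K × G) := (WithLp.equiv 2 (K × G)).symm (v1, v2) with hvdef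
    have hq1 : q.fst = y1 := rfl
    have hq2 : q.snd = y2 := rfl
    have hv1' : v.fst = v1 := rfl
    have hv2' : v.snd = v2 := rfl
    have hrel' := hrel q v ⟨by rw [hv1', hq1]; exact hv1, by rw [hv2', hq2]; exact hv2⟩
    simp only [WithLp.prod_inner_apply, WithLp.sub_fst, WithLp.sub_snd, hq1, hq2, hv1',
      hv2'] at hrel'
    change ⟪u.fst - v1, p.fst - y1⟫ + ⟪u.snd - v2, p.snd - y2⟫ ≥ 0 at hrel'
    have e1 : u.fst - v1 = -(p.fst - y1) := by
      rw [neg_sub, sub_eq_sub_iff_add_eq_add, add_comm]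
      exact he1.symm
    have e2 : u.snd - v2 = -(p.snd - y2) := by
      rw [neg_sub, sub_eq_sub_iff_add_eq_add, add_comm]
      exact he2.symm
    rw [e1, e2, inner_neg_left, inner_neg_left, real_inner_self_eq_norm_sq,
      real_inner_self_eq_norm_sq] at hrel'
    have hz1 : p.fst = y1 := by
      have : ‖p.fst - y1‖ ^ 2 = 0 := by nlinarith [sq_nonneg ‖p.fst - y1‖, sq_nonneg ‖p.snd - y2‖]
      have := (pow_eq_zero_iff (by norm_num : (2:ℕ) ≠ 0)).mp this
      exact sub_eq_zero.mp (norm_eq_zero.mp this)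
    have hz2 : p.snd = y2 := by
      have : ‖p.snd - y2‖ ^ 2 = 0 := by nlinarith [sq_nonneg ‖p.fst - y1‖, sq_nonneg ‖p.snd - y2‖]
      have := (pow_eq_zero_iff (by norm_num : (2:ℕ) ≠ 0)).mp this
      exact sub_eq_zero.mp (norm_eq_zero.mp this)
    have hu1 : u.fst = v1 := by
      rw [hz1] at he1
      exact (add_left_cancel he1).symm
    have hu2 : u.snd = v2 := by
      rw [hz2] at he2
      exact (add_left_cancel he2).symm
    exact ⟨by rw [hu1, hz1]; exact hv1, by rw [hu2, hz2]; exact hv2⟩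

end Prod

theorem stmt14 {K G : Type*}
    [NormedAddCommGroup K] [InnerProductSpace ℝ K] [CompleteSpace K]
    [NormedAddCommGroup G] [InnerProductSpace ℝ G] [CompleteSpace G]
    (B : K → Set K) (D : G → Set G)
    (hBmono : ∀ x y u v : K, u ∈ B x → v ∈ B y → ⟪u - v, x - y⟫ ≥ 0)
    (hBmax : ∀ x u : K, (∀ y v : K, v ∈ B y → ⟪u - v, x - y⟫ ≥ 0) → u ∈ B x)
    (hDmono : ∀ x y u v : G, u ∈ D x → v ∈ D y → ⟪u - v, x - y⟫ ≥ 0)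
    (hDmax : ∀ x u : G, (∀ y v : G, v ∈ D y → ⟪u - v, x - y⟫ ≥ 0) → u ∈ D x)
    (E : K → K) (hEmono : ∀ x y : K, ⟪E x - E y, x - y⟫ ≥ 0)
    (δ : ℝ) (hδ : 0 ≤ δ) (hELip : ∀ x y : K, ‖E x - E y‖ ≤ δ * ‖x - y‖)
    (V : K →L[ℝ] G)
    (A : K × G → Set (K × G))
    (hA : ∀ p : K × G, A p = {q : K × G |
      q.1 - E p.1 - (ContinuousLinearMap.adjoint V) p.2 ∈ B p.1 ∧
      p.2 ∈ D (q.2 + V p.1)})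
    (ip : K × G → K × G → ℝ)
    (hip : ∀ p q : K × G, ip p q = ⟪p.1, q.1⟫ + ⟪p.2, q.2⟫) :
    (∀ p q u v : K × G, u ∈ A p → v ∈ A q → ip (u - v) (p - q) ≥ 0) ∧
    (∀ (p u : K × G), (∀ q v : K × G, v ∈ A q → ip (u - v) (p - q) ≥ 0) → u ∈ A p) := by
  classical
  set e := WithLp.equiv 2 (K × G) with he
  set Vs := ContinuousLinearMap.adjoint V with hVs
  set T : WithLp 2 (K × G) → Set (WithLp 2 (K × G)) :=
    fun p => {q | q.fst ∈ B p.fst ∧ q.snd ∈ (fun z => {g | z ∈ D g}) p.snd} with hTdef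
  have hT : IsMaxMono T := mm_prod ⟨hBmono, hBmax⟩ (mm_inv ⟨hDmono, hDmax⟩)
  set C : WithLp 2 (K × G) → WithLp 2 (K × G) :=
    fun p => e.symm (E p.fst + Vs p.snd, -(V p.fst)) with hCdef
  -- norms on the product
  have fst_le : ∀ r : WithLp 2 (K × G), ‖r.fst‖ ≤ ‖r‖ := by
    intro r
    refine le_of_pow_le_pow_left₀ (by norm_num : (2:ℕ) ≠ 0) (norm_nonneg r) ?_
    rw [WithLp.prod_norm_sq_eq_of_L2]
    nlinarith [sq_nonneg ‖r.snd‖]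
  have snd_le : ∀ r : WithLp 2 (K × G), ‖r.snd‖ ≤ ‖r‖ := by
    intro r
    refine le_of_pow_le_pow_left₀ (by norm_num : (2:ℕ) ≠ 0) (norm_nonneg r) ?_
    rw [WithLp.prod_norm_sq_eq_of_L2]
    nlinarith [sq_nonneg ‖r.fst‖]
  have norm_le : ∀ r : WithLp 2 (K × G), ‖r‖ ≤ ‖r.fst‖ + ‖r.snd‖ := by
    intro r
    refine le_of_pow_le_pow_left₀ (by norm_num : (2:ℕ) ≠ 0) (by positivity) ?_
    rw [WithLp.prod_norm_sq_eq_of_L2]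
    nlinarith [mul_nonneg (norm_nonneg r.fst) (norm_nonneg r.snd)]
  -- C is monotone
  have hCmono : ∀ x y : WithLp 2 (K × G), ⟪C x - C y, x - y⟫ ≥ 0 := by
    intro x y
    have hCfst : (C x - C y).fst = (E x.fst - E y.fst) + (Vs x.snd - Vs y.snd) := by
      show (E x.fst + Vs x.snd) - (E y.fst + Vs y.snd) = _
      abel
    have hCsnd : (C x - C y).snd = -(V (x.fst - y.fst)) := by
      show -(V x.fst) - -(V y.fst) = _
      rw [map_sub]
      abel
    rw [WithLp.prod_inner_apply]
    change ⟪(C x - C y).fst, (x - y).fst⟫ + ⟪(C x - C y).snd, (x - y).snd⟫ ≥ 0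
    rw [hCfst, hCsnd, WithLp.sub_fst, WithLp.sub_snd, inner_add_left]
    have h1 := hEmono x.fst y.fst
    have h2 : ⟪Vs x.snd - Vs y.snd, x.fst - y.fst⟫ = ⟪x.snd - y.snd, V (x.fst - y.fst)⟫ := by
      rw [← map_sub, hVs, ContinuousLinearMap.adjoint_inner_left]
    have h3 : ⟪-(V (x.fst - y.fst)), x.snd - y.snd⟫ = -⟪x.snd - y.snd, V (x.fst - y.fst)⟫ := by
      rw [inner_neg_left, real_inner_comm]
    rw [h2, h3]
    linarith
  -- C is Lipschitz
  have hCLip : ∀ x y : WithLp 2 (K × G), ‖C x - C y‖ ≤ (δ + ‖Vs‖ + ‖V‖) * ‖x - y‖ := by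
    intro x y
    have hCfst : (C x - C y).fst = (E x.fst - E y.fst) + Vs (x.snd - y.snd) := by
      show (E x.fst + Vs x.snd) - (E y.fst + Vs y.snd) = _
      rw [map_sub]
      abel
    have hCsnd : (C x - C y).snd = -(V (x.fst - y.fst)) := by
      show -(V x.fst) - -(V y.fst) = _
      rw [map_sub]
      abel
    have hx1 : x.fst - y.fst = (x - y).fst := rfl
    have hx2 : x.snd - y.snd = (x - y).snd := rfl
    have b1 : ‖(C x - C y).fst‖ ≤ δ * ‖x - y‖ + ‖Vs‖ * ‖x - y‖ := by
      rw [hCfst]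
      refine (norm_add_le _ _).trans ?_
      have i1 : ‖E x.fst - E y.fst‖ ≤ δ * ‖x - y‖ := by
        refine (hELip x.fst y.fst).trans ?_
        refine mul_le_mul_of_nonneg_left ?_ hδ
        rw [hx1]; exact fst_le _
      have i2 : ‖Vs (x.snd - y.snd)‖ ≤ ‖Vs‖ * ‖x - y‖ := by
        refine (Vs.le_opNorm _).trans ?_
        refine mul_le_mul_of_nonneg_left ?_ (norm_nonneg Vs)
        rw [hx2]; exact snd_le _
      linarith
    have b2 : ‖(C x - C y).snd‖ ≤ ‖V‖ * ‖x - y‖ := by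
      rw [hCsnd, norm_neg]
      refine (V.le_opNorm _).trans ?_
      refine mul_le_mul_of_nonneg_left ?_ (norm_nonneg V)
      rw [hx1]; exact fst_le _
    calc ‖C x - C y‖ ≤ ‖(C x - C y).fst‖ + ‖(C x - C y).snd‖ := norm_le _
      _ ≤ (δ * ‖x - y‖ + ‖Vs‖ * ‖x - y‖) + ‖V‖ * ‖x - y‖ := by linarith
      _ = (δ + ‖Vs‖ + ‖V‖) * ‖x - y‖ := by ring
  have hS : IsMaxMono (fun p => {u | u - C p ∈ T p}) :=
    mm_sum hT C hCmono (δ + ‖Vs‖ + ‖V‖) (by positivity) hCLip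
  -- correspondence
  have hfst : ∀ p q : K × G, (e.symm q - C (e.symm p)).fst = q.1 - E p.1 - Vs p.2 := by
    intro p q
    show q.1 - (E p.1 + Vs p.2) = _
    rw [sub_sub]
  have hsnd : ∀ p q : K × G, (e.symm q - C (e.symm p)).snd = q.2 + V p.1 := by
    intro p q
    show q.2 - -(V p.1) = _
    rw [sub_neg_eq_add]
  have hcorr : ∀ p q : K × G, q ∈ A p ↔ e.symm q ∈ {u | u - C (e.symm p) ∈ T (e.symm p)} := by
    intro p q
    rw [hA p]
    show _ ↔ ((e.symm q - C (e.symm p)).fst ∈ B (e.symm p).fst ∧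
      (e.symm p).snd ∈ D ((e.symm q - C (e.symm p)).snd))
    rw [hfst p q, hsnd p q]
    rfl
  have hinner : ∀ p q u v : K × G,
      ip (u - v) (p - q) = ⟪e.symm u - e.symm v, e.symm p - e.symm q⟫ := by
    intro p q u v
    rw [hip, WithLp.prod_inner_apply]
    rfl
  constructor
  · intro p q u v hu hv
    rw [hinner]
    exact hS.1 (e.symm p) (e.symm q) (e.symm u) (e.symm v) ((hcorr p u).mp hu) ((hcorr q v).mp hv)
  · intro p u hyp
    rw [hcorr]
    apply hS.2
    intro y v hv
    have hmem : e v ∈ A (e y) := by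
      rw [hcorr (e y) (e v), Equiv.symm_apply_apply, Equiv.symm_apply_apply]
      exact hv
    have h1 := hyp (e y) (e v) hmem
    rw [hinner p (e y) u (e v), Equiv.symm_apply_apply, Equiv.symm_apply_apply] at h1
    exact h1
end
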